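/- One-shot Marton bound for private messages: Let q_{Y₁Y₂|X} be a channel from a finite set 𝒳 to 𝒴₁ × 𝒴₂. For any pmf q_{U₁U₂} on finite sets 𝒰₁ × 𝒰₂, any function x : 𝒰₁ × 𝒰₂ → 𝒳, and any positive integers M₁, M₂, J₁, J₂, define q(u₁,u₂,x,y₁,y₂) = q(u₁,u₂)·1[x = x(u₁,u₂)]·q(y₁,y₂|x). Then there exists an (M₁,M₂)-code whose probability of correct decoding is at least E_q [ ( (1 + (J₁J₂)^{−1}·2^{i_q(U₁;U₂)}) · ∏_{k=1}^{2} (1 + M_k J_k·2^{−i_q(U_k;Y_k)}) )^{−1} ]. -/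

import Mathlib

set_option linter.unusedSectionVars false
set_option linter.unusedVariables false
set_option linter.unreachableTactic false
set_option linter.unusedTactic false

open scoped BigOperators

/-- A pmf on a finite type, represented by a nonnegative real-valued function summing to 1. -/
structure FinPMF (α : Type) [Fintype α] where
  p : α → ℝ
  nonneg : ∀ a, 0 ≤ p a
  sum_eq_one : ∑ a, p a = 1

variable {U1 U2 X Y1 Y2 : Type}
  [Fintype U1] [Fintype U2] [Fintype X] [Fintype Y1] [Fintype Y2]

/-- The joint pmf `q(u₁,u₂,y₁,y₂)` induced by
`q(u₁,u₂,x,y₁,y₂) = q(u₁,u₂) 1[x = x(u₁,u₂)] q(y₁,y₂|x)` after marginalizing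
out the deterministic `x`. -/
noncomputable def qBC (qU : FinPMF (U1 × U2)) (f : U1 → U2 → X)
    (W : X → FinPMF (Y1 × Y2)) (u1 : U1) (u2 : U2) (y1 : Y1) (y2 : Y2) : ℝ :=
  qU.p (u1, u2) * (W (f u1 u2)).p (y1, y2)

noncomputable def mU1 (qU : FinPMF (U1 × U2)) (u1 : U1) : ℝ :=
  ∑ u2 : U2, qU.p (u1, u2)

noncomputable def mU2 (qU : FinPMF (U1 × U2)) (u2 : U2) : ℝ :=
  ∑ u1 : U1, qU.p (u1, u2)

noncomputable def mU1Y1 (qU : FinPMF (U1 × U2)) (f : U1 → U2 → X)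
    (W : X → FinPMF (Y1 × Y2)) (u1 : U1) (y1 : Y1) : ℝ :=
  ∑ u2 : U2, ∑ y2 : Y2, qBC qU f W u1 u2 y1 y2

noncomputable def mU2Y2 (qU : FinPMF (U1 × U2)) (f : U1 → U2 → X)
    (W : X → FinPMF (Y1 × Y2)) (u2 : U2) (y2 : Y2) : ℝ :=
  ∑ u1 : U1, ∑ y1 : Y1, qBC qU f W u1 u2 y1 y2

noncomputable def mY1 (qU : FinPMF (U1 × U2)) (f : U1 → U2 → X)
    (W : X → FinPMF (Y1 × Y2)) (y1 : Y1) : ℝ :=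
  ∑ u1 : U1, ∑ u2 : U2, ∑ y2 : Y2, qBC qU f W u1 u2 y1 y2

noncomputable def mY2 (qU : FinPMF (U1 × U2)) (f : U1 → U2 → X)
    (W : X → FinPMF (Y1 × Y2)) (y2 : Y2) : ℝ :=
  ∑ u1 : U1, ∑ u2 : U2, ∑ y1 : Y1, qBC qU f W u1 u2 y1 y2

/-- Information density `i_q(U₁;U₂)`. -/
noncomputable def iU1U2 (qU : FinPMF (U1 × U2)) (u1 : U1) (u2 : U2) : ℝ :=
  Real.logb 2 (qU.p (u1, u2) / (mU1 qU u1 * mU2 qU u2))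

/-- Information density `i_q(U₁;Y₁)`. -/
noncomputable def iU1Y1 (qU : FinPMF (U1 × U2)) (f : U1 → U2 → X)
    (W : X → FinPMF (Y1 × Y2)) (u1 : U1) (y1 : Y1) : ℝ :=
  Real.logb 2 (mU1Y1 qU f W u1 y1 / (mU1 qU u1 * mY1 qU f W y1))

/-- Information density `i_q(U₂;Y₂)`. -/
noncomputable def iU2Y2 (qU : FinPMF (U1 × U2)) (f : U1 → U2 → X)
    (W : X → FinPMF (Y1 × Y2)) (u2 : U2) (y2 : Y2) : ℝ :=
  Real.logb 2 (mU2Y2 qU f W u2 y2 / (mU2 qU u2 * mY2 qU f W y2))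

/-- Probability that both decoders of an `(M₁,M₂)`-code recover their private
message: messages uniform and independent, `X` generated by the stochastic encoder,
`(Y₁,Y₂)` by the channel, and message estimates by the stochastic decoders. -/
noncomputable def pCorrectBCp (M1 M2 : ℕ) (W : X → FinPMF (Y1 × Y2))
    (enc : Fin M1 × Fin M2 → FinPMF X)
    (dec1 : Y1 → FinPMF (Fin M1)) (dec2 : Y2 → FinPMF (Fin M2)) : ℝ :=
  ∑ m1 : Fin M1, ∑ m2 : Fin M2, ∑ x : X, ∑ y1 : Y1, ∑ y2 : Y2,
    (1 / ((M1 : ℝ) * (M2 : ℝ))) * (enc (m1, m2)).p x * (W x).p (y1, y2) *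
      (dec1 y1).p m1 * (dec2 y2).p m2


-- generic pmf helper
noncomputable def mkPMF {α : Type} [Fintype α] [Nonempty α] (g : α → ℝ) (hg : ∀ a, 0 ≤ g a) :
    FinPMF α :=
  if h : 0 < ∑ a, g a then
    { p := fun a => g a / ∑ b, g b
      nonneg := fun a => div_nonneg (hg a) h.le
      sum_eq_one := by rw [← Finset.sum_div, div_self h.ne'] }
  else
    { p := fun _ => (Fintype.card α : ℝ)⁻¹
      nonneg := fun _ => by positivity
      sum_eq_one := by
        simp only [Finset.sum_const, Finset.card_univ, nsmul_eq_mul]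
        rw [mul_inv_cancel₀]
        exact_mod_cast (Fintype.card_pos).ne' }

lemma mkPMF_ge {α : Type} [Fintype α] [Nonempty α] (g : α → ℝ) (hg : ∀ a, 0 ≤ g a) (a : α) :
    g a / ∑ b, g b ≤ (mkPMF g hg).p a := by
  unfold mkPMF
  split_ifs with h
  · exact le_refl _
  · push_neg at h
    have hz : ∑ b, g b = 0 := le_antisymm h (Finset.sum_nonneg fun b _ => hg b)
    rw [hz, div_zero]
    positivity

lemma div_le_div_nonneg_denom {a b c : ℝ} (h : a ≤ b) (hc : 0 ≤ c) : a / c ≤ b / c := by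
  rcases hc.eq_or_lt with rfl | hc
  · simp
  · gcongr

-- pi-type sum lemmas
section
variable {ι U : Type} [Fintype ι] [DecidableEq ι] [Fintype U]

lemma sum_pi_prod (f : ι → U → ℝ) :
    ∑ c : ι → U, ∏ i, f i (c i) = ∏ i, ∑ u, f i u := by
  rw [Finset.prod_univ_sum, Fintype.piFinset_univ]

lemma prod_ite_point (i₀ : ι) (A B : ι → ℝ) :
    (∏ i, if i = i₀ then A i else B i) = A i₀ * ∏ i ∈ Finset.univ.erase i₀, B i := by
  rw [← Finset.mul_prod_erase Finset.univ _ (Finset.mem_univ i₀), if_pos rfl]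
  congr 1
  exact Finset.prod_congr rfl fun i hi => if_neg (Finset.ne_of_mem_erase hi)

lemma sum_wgt_mul (m : U → ℝ) (hm : ∑ u, m u = 1) (i₀ : ι) (g : U → ℝ) :
    ∑ c : ι → U, (∏ i, m (c i)) * g (c i₀) = ∑ u, m u * g u := by
  have step : ∀ c : ι → U, (∏ i, m (c i)) * g (c i₀)
      = ∏ i, (fun i u => if i = i₀ then m u * g u else m u) i (c i) := by
    intro c
    simp only
    rw [prod_ite_point i₀ (fun i => m (c i) * g (c i)) (fun i => m (c i)),
      ← Finset.mul_prod_erase Finset.univ (fun i => m (c i)) (Finset.mem_univ i₀)]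
    ring
  rw [Finset.sum_congr rfl fun c _ => step c,
    sum_pi_prod (fun i u => if i = i₀ then m u * g u else m u)]
  have inner : ∀ i : ι, ∑ u, (if i = i₀ then m u * g u else m u)
      = (if i = i₀ then ∑ u, m u * g u else 1) := by
    intro i
    split_ifs <;> simp [hm]
  rw [Finset.prod_congr rfl fun i _ => inner i,
    prod_ite_point i₀ (fun _ => ∑ u, m u * g u) (fun _ => 1)]
  simp

lemma sum_wgt_mul₂ (m : U → ℝ) (hm : ∑ u, m u = 1) {i₀ i₁ : ι} (hne : i₀ ≠ i₁)
    (g h : U → ℝ) :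
    ∑ c : ι → U, (∏ i, m (c i)) * (g (c i₀) * h (c i₁))
      = (∑ u, m u * g u) * (∑ u, m u * h u) := by
  have step : ∀ c : ι → U, (∏ i, m (c i)) * (g (c i₀) * h (c i₁))
      = ∏ i, (fun i u => if i = i₀ then m u * g u else if i = i₁ then m u * h u else m u) i (c i) := by
    intro c
    simp only
    have e1 : ∀ (A B : ι → ℝ), (∏ i, if i = i₀ then A i else if i = i₁ then B i else m (c i))
        = A i₀ * (B i₁ * ∏ i ∈ (Finset.univ.erase i₀).erase i₁, m (c i)) := by
      intro A B
      rw [prod_ite_point i₀ A (fun i => if i = i₁ then B i else m (c i))]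
      congr 1
      rw [← Finset.mul_prod_erase (Finset.univ.erase i₀) _
        (Finset.mem_erase.mpr ⟨hne.symm, Finset.mem_univ i₁⟩), if_pos rfl]
      congr 1
      exact Finset.prod_congr rfl fun i hi => if_neg (Finset.ne_of_mem_erase hi)
    rw [e1 (fun i => m (c i) * g (c i)) (fun i => m (c i) * h (c i))]
    have e2 : (∏ i, m (c i)) = m (c i₀) * (m (c i₁) * ∏ i ∈ (Finset.univ.erase i₀).erase i₁, m (c i)) := by
      rw [← Finset.mul_prod_erase Finset.univ _ (Finset.mem_univ i₀)]
      congr 1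
      rw [← Finset.mul_prod_erase (Finset.univ.erase i₀) _
        (Finset.mem_erase.mpr ⟨hne.symm, Finset.mem_univ i₁⟩)]
    rw [e2]; ring
  rw [Finset.sum_congr rfl fun c _ => step c,
    sum_pi_prod (fun i u => if i = i₀ then m u * g u else if i = i₁ then m u * h u else m u)]
  have inner : ∀ i : ι, ∑ u, (if i = i₀ then m u * g u else if i = i₁ then m u * h u else m u)
      = (if i = i₀ then ∑ u, m u * g u else if i = i₁ then ∑ u, m u * h u else 1) := by
    intro i
    split_ifs <;> simp [hm]
  rw [Finset.prod_congr rfl fun i _ => inner i]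
  have e1 : ∀ (A B : ℝ), (∏ i : ι, if i = i₀ then A else if i = i₁ then B else 1) = A * B := by
    intro A B
    rw [prod_ite_point i₀ (fun _ => A) (fun i => if i = i₁ then B else 1)]
    congr 1
    rw [← Finset.mul_prod_erase (Finset.univ.erase i₀) _
      (Finset.mem_erase.mpr ⟨hne.symm, Finset.mem_univ i₁⟩), if_pos rfl]
    rw [Finset.prod_congr rfl fun i hi => if_neg (Finset.ne_of_mem_erase hi)]
    simp
  exact e1 _ _
end

-- product codebook expectation lemmas
section
variable {ι1 ι2 U1 U2 : Type} [Fintype ι1] [DecidableEq ι1] [Fintype ι2] [DecidableEq ι2]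
  [Fintype U1] [Fintype U2] (m1 : U1 → ℝ) (m2 : U2 → ℝ)
  (hm1 : ∑ u, m1 u = 1) (hm2 : ∑ v, m2 v = 1)

include hm1 hm2

lemma W11 (i1 : ι1) (i2 : ι2) (Φ : U1 → U2 → ℝ) :
    ∑ c : (ι1 → U1) × (ι2 → U2), ((∏ i, m1 (c.1 i)) * ∏ i, m2 (c.2 i)) * Φ (c.1 i1) (c.2 i2)
      = ∑ u, ∑ v, m1 u * m2 v * Φ u v := by
  rw [Fintype.sum_prod_type]
  have inner : ∀ c1 : ι1 → U1,
      ∑ c2 : ι2 → U2, ((∏ i, m1 (c1 i)) * ∏ i, m2 (c2 i)) * Φ (c1 i1) (c2 i2)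
      = (∏ i, m1 (c1 i)) * ∑ v, m2 v * Φ (c1 i1) v := by
    intro c1
    rw [← sum_wgt_mul m2 hm2 i2 (fun v => Φ (c1 i1) v), Finset.mul_sum]
    exact Finset.sum_congr rfl fun c2 _ => by ring
  rw [Finset.sum_congr rfl fun c1 _ => inner c1,
    sum_wgt_mul m1 hm1 i1 (fun u => ∑ v, m2 v * Φ u v)]
  exact Finset.sum_congr rfl fun u _ => by rw [Finset.mul_sum]; exact Finset.sum_congr rfl fun v _ => by ring

lemma W12 (i1 : ι1) {i2 i2' : ι2} (h : i2 ≠ i2') (F H : U1 → U2 → ℝ) :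
    ∑ c : (ι1 → U1) × (ι2 → U2), ((∏ i, m1 (c.1 i)) * ∏ i, m2 (c.2 i)) *
        (F (c.1 i1) (c.2 i2) * H (c.1 i1) (c.2 i2'))
      = ∑ u, m1 u * ((∑ v, m2 v * F u v) * (∑ v, m2 v * H u v)) := by
  rw [Fintype.sum_prod_type]
  have inner : ∀ c1 : ι1 → U1,
      ∑ c2 : ι2 → U2, ((∏ i, m1 (c1 i)) * ∏ i, m2 (c2 i)) *
        (F (c1 i1) (c2 i2) * H (c1 i1) (c2 i2'))
      = (∏ i, m1 (c1 i)) * ((∑ v, m2 v * F (c1 i1) v) * (∑ v, m2 v * H (c1 i1) v)) := by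
    intro c1
    rw [← sum_wgt_mul₂ m2 hm2 h (fun v => F (c1 i1) v) (fun v => H (c1 i1) v), Finset.mul_sum]
    exact Finset.sum_congr rfl fun c2 _ => by ring
  rw [Finset.sum_congr rfl fun c1 _ => inner c1,
    sum_wgt_mul m1 hm1 i1 (fun u => (∑ v, m2 v * F u v) * (∑ v, m2 v * H u v))]

lemma W21 {i1 i1' : ι1} (h : i1 ≠ i1') (i2 : ι2) (F H : U1 → U2 → ℝ) :
    ∑ c : (ι1 → U1) × (ι2 → U2), ((∏ i, m1 (c.1 i)) * ∏ i, m2 (c.2 i)) *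
        (F (c.1 i1) (c.2 i2) * H (c.1 i1') (c.2 i2))
      = ∑ v, m2 v * ((∑ u, m1 u * F u v) * (∑ u, m1 u * H u v)) := by
  rw [Fintype.sum_prod_type_right]
  have inner : ∀ c2 : ι2 → U2,
      ∑ c1 : ι1 → U1, ((∏ i, m1 (c1 i)) * ∏ i, m2 (c2 i)) *
        (F (c1 i1) (c2 i2) * H (c1 i1') (c2 i2))
      = (∏ i, m2 (c2 i)) * ((∑ u, m1 u * F u (c2 i2)) * (∑ u, m1 u * H u (c2 i2))) := by
    intro c2
    rw [← sum_wgt_mul₂ m1 hm1 h (fun u => F u (c2 i2)) (fun u => H u (c2 i2)), Finset.mul_sum]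
    exact Finset.sum_congr rfl fun c1 _ => by ring
  rw [Finset.sum_congr rfl fun c2 _ => inner c2,
    sum_wgt_mul m2 hm2 i2 (fun v => (∑ u, m1 u * F u v) * (∑ u, m1 u * H u v))]

lemma W22 {i1 i1' : ι1} (h : i1 ≠ i1') {i2 i2' : ι2} (h2 : i2 ≠ i2') (F H : U1 → U2 → ℝ) :
    ∑ c : (ι1 → U1) × (ι2 → U2), ((∏ i, m1 (c.1 i)) * ∏ i, m2 (c.2 i)) *
        (F (c.1 i1) (c.2 i2) * H (c.1 i1') (c.2 i2'))
      = (∑ u, ∑ v, m1 u * m2 v * F u v) * (∑ u, ∑ v, m1 u * m2 v * H u v) := by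
  rw [Fintype.sum_prod_type]
  have inner : ∀ c1 : ι1 → U1,
      ∑ c2 : ι2 → U2, ((∏ i, m1 (c1 i)) * ∏ i, m2 (c2 i)) *
        (F (c1 i1) (c2 i2) * H (c1 i1') (c2 i2'))
      = (∏ i, m1 (c1 i)) * ((∑ v, m2 v * F (c1 i1) v) * (∑ v, m2 v * H (c1 i1') v)) := by
    intro c1
    rw [← sum_wgt_mul₂ m2 hm2 h2 (fun v => F (c1 i1) v) (fun v => H (c1 i1') v), Finset.mul_sum]
    exact Finset.sum_congr rfl fun c2 _ => by ring
  rw [Finset.sum_congr rfl fun c1 _ => inner c1,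
    sum_wgt_mul₂ m1 hm1 h (fun u => ∑ v, m2 v * F u v) (fun u => ∑ v, m2 v * H u v)]
  congr 1 <;>
  · refine Finset.sum_congr rfl fun u _ => ?_
    rw [Finset.mul_sum]
    exact Finset.sum_congr rfl fun v _ => by ring
end

-- scalar inequalities
lemma amgm4 {x y z : ℝ} (hx : 0 < x) (hy : 0 < y) (hz : 0 < z) :
    4 - x - y - z ≤ (x*y*z)⁻¹ := by
  have key := Real.geom_mean_le_arith_mean4_weighted (by norm_num : (0:ℝ) ≤ 1/4)
    (by norm_num : (0:ℝ) ≤ 1/4) (by norm_num : (0:ℝ) ≤ 1/4) (by norm_num : (0:ℝ) ≤ 1/4)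
    hx.le hy.le hz.le (by positivity : (0:ℝ) ≤ (x*y*z)⁻¹) (by norm_num)
  have hprod : x ^ ((1:ℝ)/4) * y ^ ((1:ℝ)/4) * z ^ ((1:ℝ)/4) * ((x*y*z)⁻¹) ^ ((1:ℝ)/4) = 1 := by
    rw [← Real.mul_rpow hx.le hy.le, ← Real.mul_rpow (by positivity) hz.le,
      ← Real.mul_rpow (by positivity) (by positivity), mul_inv_cancel₀ (by positivity)]
    simp
  rw [hprod] at key
  linarith

/-- The tangent-line (Jensen) step. -/
lemma tangent {r w s1 s2 G D1 D2 K0 K1 K2 : ℝ}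
    (hr : 0 ≤ r) (hw : 0 ≤ w) (hs1 : 0 ≤ s1) (hs2 : 0 ≤ s2)
    (hK0 : 0 ≤ K0) (hK1 : 0 ≤ K1) (hK2 : 0 ≤ K2)
    (hG : r ≤ G) (hD1 : s1 ≤ D1) (hD2 : s2 ≤ D2) :
    r * w * s1 * s2 / ((r + K0) * (s1 + K1) * (s2 + K2)) *
      (4 - G / (r + K0) - D1 / (s1 + K1) - D2 / (s2 + K2))
    ≤ r * w * s1 * s2 / (G * D1 * D2) := by
  rcases eq_or_lt_of_le (by positivity : (0:ℝ) ≤ r * w * s1 * s2) with hN | hN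
  · rw [← hN]; simp
  · have hr' : 0 < r := by
      rcases hr.eq_or_lt with h | h; · exfalso; rw [← h] at hN; simp at hN
      exact h
    have hw' : 0 < w := by
      rcases hw.eq_or_lt with h | h; · exfalso; rw [← h] at hN; simp at hN
      exact h
    have hs1' : 0 < s1 := by
      rcases hs1.eq_or_lt with h | h; · exfalso; rw [← h] at hN; simp at hN
      exact h
    have hs2' : 0 < s2 := by
      rcases hs2.eq_or_lt with h | h; · exfalso; rw [← h] at hN; simp at hN
      exact h
    have hG' : 0 < G := lt_of_lt_of_le hr' hG
    have hD1' : 0 < D1 := lt_of_lt_of_le hs1' hD1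
    have hD2' : 0 < D2 := lt_of_lt_of_le hs2' hD2
    have ha : 0 < r + K0 := by linarith
    have hb : 0 < s1 + K1 := by linarith
    have hc : 0 < s2 + K2 := by linarith
    have key := amgm4 (div_pos hG' ha) (div_pos hD1' hb) (div_pos hD2' hc)
    calc r * w * s1 * s2 / ((r + K0) * (s1 + K1) * (s2 + K2)) *
          (4 - G / (r + K0) - D1 / (s1 + K1) - D2 / (s2 + K2))
        ≤ r * w * s1 * s2 / ((r + K0) * (s1 + K1) * (s2 + K2)) *
          ((G / (r + K0)) * (D1 / (s1 + K1)) * (D2 / (s2 + K2)))⁻¹ := by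
          exact mul_le_mul_of_nonneg_left key (by positivity)
      _ = r * w * s1 * s2 / (G * D1 * D2) := by
          field_simp

/-- The final pointwise step after taking codebook expectations. -/
lemma pointfinal {r w s1 s2 K0 K1 K2 KK0 KK1 KK2 : ℝ}
    (hr : 0 ≤ r) (hw : 0 ≤ w) (hs1 : 0 ≤ s1) (hs2 : 0 ≤ s2)
    (hK0 : 0 ≤ K0) (hK1 : 0 ≤ K1) (hK2 : 0 ≤ K2)
    (h0 : K0 ≤ KK0) (h1 : K1 ≤ KK1) (h2 : K2 ≤ KK2) :
    r * w * s1 * s2 / ((r + KK0) * (s1 + KK1) * (s2 + KK2))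
    ≤ 4 * (r * w * s1 * s2 / ((r + K0) * (s1 + K1) * (s2 + K2)))
      - (r * w * s1 * s2 / ((r + K0) * (s1 + K1) * (s2 + K2)) / (r + K0)) * (r + K0)
      - (r * w * s1 * s2 / ((r + K0) * (s1 + K1) * (s2 + K2)) / (s1 + K1)) * (s1 + K1)
      - (r * w * s1 * s2 / ((r + K0) * (s1 + K1) * (s2 + K2)) / (s2 + K2)) * (s2 + K2) := by
  rcases eq_or_lt_of_le (by positivity : (0:ℝ) ≤ r * w * s1 * s2) with hN | hN
  · rw [← hN]; simp
  · have hr' : 0 < r := by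
      rcases hr.eq_or_lt with h | h; · exfalso; rw [← h] at hN; simp at hN
      exact h
    have hw' : 0 < w := by
      rcases hw.eq_or_lt with h | h; · exfalso; rw [← h] at hN; simp at hN
      exact h
    have hs1' : 0 < s1 := by
      rcases hs1.eq_or_lt with h | h; · exfalso; rw [← h] at hN; simp at hN
      exact h
    have hs2' : 0 < s2 := by
      rcases hs2.eq_or_lt with h | h; · exfalso; rw [← h] at hN; simp at hN
      exact h
    have ha : 0 < r + K0 := by linarith
    have hb : 0 < s1 + K1 := by linarith
    have hc : 0 < s2 + K2 := by linarith
    have e1 : ∀ Z : ℝ, 0 < Z → (r * w * s1 * s2 / ((r + K0) * (s1 + K1) * (s2 + K2)) / Z) * Z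
        = r * w * s1 * s2 / ((r + K0) * (s1 + K1) * (s2 + K2)) := by
      intro Z hZ
      rw [div_mul_cancel₀ _ hZ.ne']
    have h4 : ∀ B : ℝ, 4 * B - B - B - B = B := fun B => by ring
    rw [e1 _ ha, e1 _ hb, e1 _ hc, h4 _]
    have l1 : r + K0 ≤ r + KK0 := by linarith
    have l2 : s1 + K1 ≤ s1 + KK1 := by linarith
    have l3 : s2 + K2 ≤ s2 + KK2 := by linarith
    have hd : (r + K0) * (s1 + K1) * (s2 + K2) ≤ (r + KK0) * (s1 + KK1) * (s2 + KK2) :=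
      mul_le_mul (mul_le_mul l1 l2 hb.le (by linarith)) l3 hc.le
        (mul_nonneg (by linarith) (by linarith))
    exact div_le_div_of_nonneg_left hN.le (mul_pos (mul_pos ha hb) hc) hd

-- marginal lemmas
section MBaux
variable (qU : FinPMF (U1 × U2)) (f : U1 → U2 → X) (W : X → FinPMF (Y1 × Y2))

noncomputable def rAux (u1 : U1) (u2 : U2) : ℝ :=
  qU.p (u1, u2) / (mU1 qU u1 * mU2 qU u2)

noncomputable def s1Aux (u1 : U1) (y1 : Y1) : ℝ :=
  mU1Y1 qU f W u1 y1 / (mU1 qU u1 * mY1 qU f W y1)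

noncomputable def s2Aux (u2 : U2) (y2 : Y2) : ℝ :=
  mU2Y2 qU f W u2 y2 / (mU2 qU u2 * mY2 qU f W y2)

lemma qBC_nonneg (u1 u2 y1 y2) : 0 ≤ qBC qU f W u1 u2 y1 y2 :=
  mul_nonneg (qU.nonneg _) ((W _).nonneg _)

lemma mU1_nonneg (u1) : 0 ≤ mU1 qU u1 := Finset.sum_nonneg fun _ _ => qU.nonneg _
lemma mU2_nonneg (u2) : 0 ≤ mU2 qU u2 := Finset.sum_nonneg fun _ _ => qU.nonneg _
lemma mU1Y1_nonneg (u1 y1) : 0 ≤ mU1Y1 qU f W u1 y1 :=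
  Finset.sum_nonneg fun _ _ => Finset.sum_nonneg fun _ _ => qBC_nonneg qU f W _ _ _ _
lemma mU2Y2_nonneg (u2 y2) : 0 ≤ mU2Y2 qU f W u2 y2 :=
  Finset.sum_nonneg fun _ _ => Finset.sum_nonneg fun _ _ => qBC_nonneg qU f W _ _ _ _
lemma mY1_nonneg (y1) : 0 ≤ mY1 qU f W y1 :=
  Finset.sum_nonneg fun _ _ => mU1Y1_nonneg qU f W _ _
lemma mY2_nonneg (y2) : 0 ≤ mY2 qU f W y2 :=
  Finset.sum_nonneg fun _ _ => Finset.sum_nonneg fun _ _ =>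
    Finset.sum_nonneg fun _ _ => qBC_nonneg qU f W _ _ _ _
lemma rAux_nonneg (u1 u2) : 0 ≤ rAux qU u1 u2 :=
  div_nonneg (qU.nonneg _) (mul_nonneg (mU1_nonneg qU _) (mU2_nonneg qU _))
lemma s1Aux_nonneg (u1 y1) : 0 ≤ s1Aux qU f W u1 y1 :=
  div_nonneg (mU1Y1_nonneg qU f W _ _) (mul_nonneg (mU1_nonneg qU _) (mY1_nonneg qU f W _))
lemma s2Aux_nonneg (u2 y2) : 0 ≤ s2Aux qU f W u2 y2 :=
  div_nonneg (mU2Y2_nonneg qU f W _ _) (mul_nonneg (mU2_nonneg qU _) (mY2_nonneg qU f W _))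

lemma sum_mU1 : ∑ u1, mU1 qU u1 = 1 := by
  rw [← qU.sum_eq_one, Fintype.sum_prod_type]; rfl

lemma sum_mU2 : ∑ u2, mU2 qU u2 = 1 := by
  rw [← qU.sum_eq_one, Fintype.sum_prod_type_right]; rfl

lemma qU_le_mU1 (u1 u2) : qU.p (u1, u2) ≤ mU1 qU u1 :=
  Finset.single_le_sum (fun v _ => qU.nonneg (u1, v)) (Finset.mem_univ u2)

lemma qU_le_mU2 (u1 u2) : qU.p (u1, u2) ≤ mU2 qU u2 :=
  Finset.single_le_sum (fun v _ => qU.nonneg (v, u2)) (Finset.mem_univ u1)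

lemma mU1Y1_le (u1 y1) : mU1Y1 qU f W u1 y1 ≤ mU1 qU u1 := by
  unfold mU1Y1 mU1 qBC
  refine Finset.sum_le_sum fun u2 _ => ?_
  rw [← Finset.mul_sum]
  have h1 : ∑ y2, (W (f u1 u2)).p (y1, y2) ≤ 1 := by
    rw [← (W (f u1 u2)).sum_eq_one, Fintype.sum_prod_type]
    refine Finset.single_le_sum (f := fun a => ∑ b, (W (f u1 u2)).p (a, b))
      (fun a _ => Finset.sum_nonneg fun b _ => (W _).nonneg _) (Finset.mem_univ y1)
  calc qU.p (u1, u2) * ∑ y2, (W (f u1 u2)).p (y1, y2)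
      ≤ qU.p (u1, u2) * 1 := by
        exact mul_le_mul_of_nonneg_left h1 (qU.nonneg _)
    _ = qU.p (u1, u2) := mul_one _

lemma mU2Y2_le (u2 y2) : mU2Y2 qU f W u2 y2 ≤ mU2 qU u2 := by
  unfold mU2Y2 mU2 qBC
  refine Finset.sum_le_sum fun u1 _ => ?_
  rw [← Finset.mul_sum]
  have h1 : ∑ y1, (W (f u1 u2)).p (y1, y2) ≤ 1 := by
    rw [← (W (f u1 u2)).sum_eq_one, Fintype.sum_prod_type_right]
    refine Finset.single_le_sum (f := fun b => ∑ a, (W (f u1 u2)).p (a, b))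
      (fun b _ => Finset.sum_nonneg fun a _ => (W _).nonneg _) (Finset.mem_univ y2)
  calc qU.p (u1, u2) * ∑ y1, (W (f u1 u2)).p (y1, y2)
      ≤ qU.p (u1, u2) * 1 := mul_le_mul_of_nonneg_left h1 (qU.nonneg _)
    _ = qU.p (u1, u2) := mul_one _

lemma sum_mU1Y1 (y1) : ∑ u1, mU1Y1 qU f W u1 y1 = mY1 qU f W y1 := rfl
lemma sum_mU2Y2 (y2) : ∑ u2, mU2Y2 qU f W u2 y2 = mY2 qU f W y2 := Finset.sum_comm

/-- helper: `a * (q / (a * d)) ≤ q / d` when `a = 0 → q = 0`. -/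
lemma mul_div_mul_le {a d q : ℝ} (ha : 0 ≤ a) (hq : 0 ≤ q) (hd : 0 ≤ d)
    (h0 : a = 0 → q = 0) : a * (q / (a * d)) ≤ q / d := by
  rcases ha.eq_or_lt with h | h
  · rw [← h, h0 h.symm]; simp
  · rw [mul_div_assoc', mul_div_mul_left q d h.ne']

/-- helper for the second factor: `b * (q / (a * b)) ≤ q / a`. -/
lemma mul_div_mul_le' {a b q : ℝ} (hb : 0 ≤ b) (hq : 0 ≤ q) (ha : 0 ≤ a)
    (h0 : b = 0 → q = 0) : b * (q / (a * b)) ≤ q / a := by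
  rw [mul_comm a b]; exact mul_div_mul_le hb hq ha h0

lemma E1 (y1) : ∑ u, mU1 qU u * s1Aux qU f W u y1 ≤ 1 := by
  have step : ∀ u, mU1 qU u * s1Aux qU f W u y1 ≤ mU1Y1 qU f W u y1 / mY1 qU f W y1 := by
    intro u
    refine mul_div_mul_le (mU1_nonneg qU u) (mU1Y1_nonneg qU f W u y1) (mY1_nonneg qU f W y1)
      (fun h => le_antisymm (h ▸ mU1Y1_le qU f W u y1) (mU1Y1_nonneg qU f W u y1))
  calc ∑ u, mU1 qU u * s1Aux qU f W u y1
      ≤ ∑ u, mU1Y1 qU f W u y1 / mY1 qU f W y1 := Finset.sum_le_sum fun u _ => step u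
    _ = mY1 qU f W y1 / mY1 qU f W y1 := by rw [← Finset.sum_div, sum_mU1Y1]
    _ ≤ 1 := div_self_le_one _

lemma E2 (y2) : ∑ v, mU2 qU v * s2Aux qU f W v y2 ≤ 1 := by
  have step : ∀ v, mU2 qU v * s2Aux qU f W v y2 ≤ mU2Y2 qU f W v y2 / mY2 qU f W y2 := by
    intro v
    refine mul_div_mul_le (mU2_nonneg qU v) (mU2Y2_nonneg qU f W v y2) (mY2_nonneg qU f W y2)
      (fun h => le_antisymm (h ▸ mU2Y2_le qU f W v y2) (mU2Y2_nonneg qU f W v y2))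
  calc ∑ v, mU2 qU v * s2Aux qU f W v y2
      ≤ ∑ v, mU2Y2 qU f W v y2 / mY2 qU f W y2 := Finset.sum_le_sum fun v _ => step v
    _ = mY2 qU f W y2 / mY2 qU f W y2 := by rw [← Finset.sum_div, sum_mU2Y2]
    _ ≤ 1 := div_self_le_one _

lemma E3 (u) : ∑ v, mU2 qU v * rAux qU u v ≤ 1 := by
  have step : ∀ v, mU2 qU v * rAux qU u v ≤ qU.p (u, v) / mU1 qU u := by
    intro v
    refine mul_div_mul_le' (mU2_nonneg qU v) (qU.nonneg _) (mU1_nonneg qU u)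
      (fun h => le_antisymm (h ▸ qU_le_mU2 qU u v) (qU.nonneg _))
  calc ∑ v, mU2 qU v * rAux qU u v ≤ ∑ v, qU.p (u, v) / mU1 qU u :=
      Finset.sum_le_sum fun v _ => step v
    _ = mU1 qU u / mU1 qU u := by rw [← Finset.sum_div]; rfl
    _ ≤ 1 := div_self_le_one _

lemma E4 (v) : ∑ u, mU1 qU u * rAux qU u v ≤ 1 := by
  have step : ∀ u, mU1 qU u * rAux qU u v ≤ qU.p (u, v) / mU2 qU v := by
    intro u
    refine mul_div_mul_le (mU1_nonneg qU u) (qU.nonneg _) (mU2_nonneg qU v)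
      (fun h => le_antisymm (h ▸ qU_le_mU1 qU u v) (qU.nonneg _))
  calc ∑ u, mU1 qU u * rAux qU u v ≤ ∑ u, qU.p (u, v) / mU2 qU v :=
      Finset.sum_le_sum fun u _ => step u
    _ = mU2 qU v / mU2 qU v := by rw [← Finset.sum_div]; rfl
    _ ≤ 1 := div_self_le_one _

lemma E5 : ∑ u, ∑ v, mU1 qU u * mU2 qU v * rAux qU u v ≤ 1 := by
  calc ∑ u, ∑ v, mU1 qU u * mU2 qU v * rAux qU u v
      = ∑ u, mU1 qU u * ∑ v, mU2 qU v * rAux qU u v := by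
        refine Finset.sum_congr rfl fun u _ => ?_
        rw [Finset.mul_sum]
        exact Finset.sum_congr rfl fun v _ => by ring
    _ ≤ ∑ u, mU1 qU u * 1 := Finset.sum_le_sum fun u _ =>
        mul_le_mul_of_nonneg_left (E3 qU u) (mU1_nonneg qU u)
    _ = 1 := by simp [sum_mU1 qU]

/-- positivity facts on the support -/
lemma support_pos {u1 u2 y1 y2} (h : 0 < qBC qU f W u1 u2 y1 y2) :
    0 < qU.p (u1, u2) ∧ 0 < mU1 qU u1 ∧ 0 < mU2 qU u2 ∧ 0 < rAux qU u1 u2 ∧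
    0 < s1Aux qU f W u1 y1 ∧ 0 < s2Aux qU f W u2 y2 := by
  have hq : 0 < qU.p (u1, u2) := by
    rcases mul_pos_iff.mp h with ⟨h1, _⟩ | ⟨h1, _⟩
    · exact h1
    · exact absurd h1 (not_lt.mpr (qU.nonneg _))
  have hm1p : 0 < mU1 qU u1 := lt_of_lt_of_le hq (qU_le_mU1 qU u1 u2)
  have hm2p : 0 < mU2 qU u2 := lt_of_lt_of_le hq (qU_le_mU2 qU u1 u2)
  have hrp : 0 < rAux qU u1 u2 := div_pos hq (mul_pos hm1p hm2p)
  have hq1p : 0 < mU1Y1 qU f W u1 y1 := by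
    refine lt_of_lt_of_le h ?_
    calc qBC qU f W u1 u2 y1 y2 ≤ ∑ y2', qBC qU f W u1 u2 y1 y2' :=
        Finset.single_le_sum (fun t _ => qBC_nonneg qU f W u1 u2 y1 t) (Finset.mem_univ y2)
      _ ≤ mU1Y1 qU f W u1 y1 :=
        Finset.single_le_sum (f := fun v => ∑ y2', qBC qU f W u1 v y1 y2')
          (fun v _ => Finset.sum_nonneg fun t _ => qBC_nonneg qU f W u1 v y1 t)
          (Finset.mem_univ u2)
  have hmy1p : 0 < mY1 qU f W y1 := by
    refine lt_of_lt_of_le hq1p ?_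
    rw [← sum_mU1Y1 qU f W y1]
    exact Finset.single_le_sum (f := fun v => mU1Y1 qU f W v y1)
      (fun v _ => mU1Y1_nonneg qU f W v y1) (Finset.mem_univ u1)
  have hq2p : 0 < mU2Y2 qU f W u2 y2 := by
    refine lt_of_lt_of_le h ?_
    calc qBC qU f W u1 u2 y1 y2 ≤ ∑ y1', qBC qU f W u1 u2 y1' y2 :=
        Finset.single_le_sum (fun t _ => qBC_nonneg qU f W u1 u2 t y2) (Finset.mem_univ y1)
      _ ≤ mU2Y2 qU f W u2 y2 :=
        Finset.single_le_sum (f := fun v => ∑ y1', qBC qU f W v u2 y1' y2)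
          (fun v _ => Finset.sum_nonneg fun t _ => qBC_nonneg qU f W v u2 t y2)
          (Finset.mem_univ u1)
  have hmy2p : 0 < mY2 qU f W y2 := by
    refine lt_of_lt_of_le hq2p ?_
    rw [← sum_mU2Y2 qU f W y2]
    exact Finset.single_le_sum (f := fun v => mU2Y2 qU f W v y2)
      (fun v _ => mU2Y2_nonneg qU f W v y2) (Finset.mem_univ u2)
  exact ⟨hq, hm1p, hm2p, hrp, div_pos hq1p (mul_pos hm1p hmy1p),
    div_pos hq2p (mul_pos hm2p hmy2p)⟩

/-- Rewriting one term of the Marton bound on the support. -/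
lemma kappa_term (M1 M2 J1 J2 : ℕ) (hJ1 : 0 < J1) (hJ2 : 0 < J2)
    {u1 u2 y1 y2} (h : 0 < qBC qU f W u1 u2 y1 y2) :
    qBC qU f W u1 u2 y1 y2 *
      ((1 + ((J1 : ℝ) * (J2 : ℝ))⁻¹ * (2 : ℝ) ^ (iU1U2 qU u1 u2)) *
       (1 + (M1 : ℝ) * (J1 : ℝ) * (2 : ℝ) ^ (-(iU1Y1 qU f W u1 y1))) *
       (1 + (M2 : ℝ) * (J2 : ℝ) * (2 : ℝ) ^ (-(iU2Y2 qU f W u2 y2))))⁻¹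
    = ((J1 : ℝ) * (J2 : ℝ)) * (mU1 qU u1 * mU2 qU u2 *
        (rAux qU u1 u2 * (W (f u1 u2)).p (y1, y2) * s1Aux qU f W u1 y1 *
          s2Aux qU f W u2 y2))
      / ((rAux qU u1 u2 + (J1 : ℝ) * (J2 : ℝ)) *
         ((s1Aux qU f W u1 y1 + (M1 : ℝ) * (J1 : ℝ)) *
          (s2Aux qU f W u2 y2 + (M2 : ℝ) * (J2 : ℝ)))) := by
  obtain ⟨hq, hm1p, hm2p, hrp, hs1p, hs2p⟩ := support_pos qU f W h
  have e0 : (2 : ℝ) ^ (iU1U2 qU u1 u2) = rAux qU u1 u2 :=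
    Real.rpow_logb (by norm_num) (by norm_num) hrp
  have e1 : (2 : ℝ) ^ (-(iU1Y1 qU f W u1 y1)) = (s1Aux qU f W u1 y1)⁻¹ := by
    rw [Real.rpow_neg (by norm_num)]
    exact congrArg Inv.inv (Real.rpow_logb (by norm_num) (by norm_num) hs1p)
  have e2 : (2 : ℝ) ^ (-(iU2Y2 qU f W u2 y2)) = (s2Aux qU f W u2 y2)⁻¹ := by
    rw [Real.rpow_neg (by norm_num)]
    exact congrArg Inv.inv (Real.rpow_logb (by norm_num) (by norm_num) hs2p)
  have hqBC : qBC qU f W u1 u2 y1 y2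
      = mU1 qU u1 * mU2 qU u2 * rAux qU u1 u2 * (W (f u1 u2)).p (y1, y2) := by
    unfold qBC rAux
    field_simp
  have hJ1R : (0:ℝ) < (J1 : ℝ) := by exact_mod_cast hJ1
  have hJ2R : (0:ℝ) < (J2 : ℝ) := by exact_mod_cast hJ2
  have hM1R : (0:ℝ) ≤ (M1 : ℝ) := Nat.cast_nonneg _
  have hM2R : (0:ℝ) ≤ (M2 : ℝ) := Nat.cast_nonneg _
  rw [e0, e1, e2, hqBC]
  have hd1 : (0:ℝ) < 1 + ((J1 : ℝ) * (J2 : ℝ))⁻¹ * rAux qU u1 u2 := by positivity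
  have hd2 : (0:ℝ) < 1 + (M1 : ℝ) * (J1 : ℝ) * (s1Aux qU f W u1 y1)⁻¹ := by positivity
  have hd3 : (0:ℝ) < 1 + (M2 : ℝ) * (J2 : ℝ) * (s2Aux qU f W u2 y2)⁻¹ := by positivity
  have hr2 : (0:ℝ) < rAux qU u1 u2 + (J1 : ℝ) * (J2 : ℝ) := by positivity
  have hs12 : (0:ℝ) < s1Aux qU f W u1 y1 + (M1 : ℝ) * (J1 : ℝ) := by positivity
  have hs22 : (0:ℝ) < s2Aux qU f W u2 y2 + (M2 : ℝ) * (J2 : ℝ) := by positivity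
  field_simp
  ring

end MBaux

section MBcode
variable [DecidableEq X] (qU : FinPMF (U1 × U2)) (f : U1 → U2 → X) (W : X → FinPMF (Y1 × Y2))
  {M1 M2 J1 J2 : ℕ}
local notation "CB" => (Fin M1 × Fin J1 → U1) × (Fin M2 × Fin J2 → U2)

/-- unnormalized encoder weights -/
noncomputable def gEnc (c : (Fin M1 × Fin J1 → U1) × (Fin M2 × Fin J2 → U2))
    (mm : Fin M1 × Fin M2) (x : X) : ℝ :=
  ∑ j1, ∑ j2, if f (c.1 (mm.1, j1)) (c.2 (mm.2, j2)) = x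
    then rAux qU (c.1 (mm.1, j1)) (c.2 (mm.2, j2)) else 0

lemma gEnc_nonneg (c : CB) (mm) (x) : 0 ≤ gEnc qU f c mm x :=
  Finset.sum_nonneg fun _ _ => Finset.sum_nonneg fun _ _ => by
    split_ifs
    · exact rAux_nonneg qU _ _
    · exact le_refl 0

/-- the normalizer of the encoder -/
noncomputable def GC (c : (Fin M1 × Fin J1 → U1) × (Fin M2 × Fin J2 → U2))
    (mm : Fin M1 × Fin M2) : ℝ :=
  ∑ j1, ∑ j2, rAux qU (c.1 (mm.1, j1)) (c.2 (mm.2, j2))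

lemma GC_nonneg (c : CB) (mm) : 0 ≤ GC qU c mm :=
  Finset.sum_nonneg fun _ _ => Finset.sum_nonneg fun _ _ => rAux_nonneg qU _ _

lemma sum_gEnc (c : CB) (mm) : ∑ x, gEnc qU f c mm x = GC qU c mm := by
  unfold gEnc GC
  rw [Finset.sum_comm]
  refine Finset.sum_congr rfl fun j1 _ => ?_
  rw [Finset.sum_comm]
  refine Finset.sum_congr rfl fun j2 _ => ?_
  simp

/-- the random-codebook encoder -/
noncomputable def encC [Nonempty X] (c : (Fin M1 × Fin J1 → U1) × (Fin M2 × Fin J2 → U2))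
    (mm : Fin M1 × Fin M2) : FinPMF X :=
  mkPMF (gEnc qU f c mm) (gEnc_nonneg qU f c mm)

lemma encC_ge [Nonempty X] (c : CB) (mm) (x) :
    gEnc qU f c mm x / GC qU c mm ≤ (encC qU f c mm).p x := by
  rw [← sum_gEnc qU f c mm]
  exact mkPMF_ge _ _ x

/-- unnormalized decoder-1 weights -/
noncomputable def gDec1 (c1 : Fin M1 × Fin J1 → U1) (y1 : Y1) (m : Fin M1) : ℝ :=
  ∑ j, s1Aux qU f W (c1 (m, j)) y1

noncomputable def D1C (c1 : Fin M1 × Fin J1 → U1) (y1 : Y1) : ℝ :=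
  ∑ i, s1Aux qU f W (c1 i) y1

lemma D1C_nonneg (c1 : Fin M1 × Fin J1 → U1) (y1) : 0 ≤ D1C qU f W c1 y1 :=
  Finset.sum_nonneg fun _ _ => s1Aux_nonneg qU f W _ _

lemma sum_gDec1 (c1 : Fin M1 × Fin J1 → U1) (y1) :
    ∑ m, gDec1 qU f W c1 y1 m = D1C qU f W c1 y1 := by
  unfold gDec1 D1C
  exact (Fintype.sum_prod_type (f := fun i => s1Aux qU f W (c1 i) y1)).symm

noncomputable def dec1C [Nonempty (Fin M1)] (c1 : Fin M1 × Fin J1 → U1) (y1 : Y1) :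
    FinPMF (Fin M1) :=
  mkPMF (gDec1 qU f W c1 y1) (fun m => Finset.sum_nonneg fun _ _ => s1Aux_nonneg qU f W _ _)

lemma dec1C_ge [Nonempty (Fin M1)] (c1 : Fin M1 × Fin J1 → U1) (y1) (m : Fin M1) (j : Fin J1) :
    s1Aux qU f W (c1 (m, j)) y1 / D1C qU f W c1 y1 ≤ (dec1C qU f W c1 y1).p m := by
  refine le_trans (div_le_div_nonneg_denom
    (Finset.single_le_sum (f := fun j' => s1Aux qU f W (c1 (m, j')) y1)
      (fun j' _ => s1Aux_nonneg qU f W _ _) (Finset.mem_univ j))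
    (D1C_nonneg qU f W c1 y1)) ?_
  rw [show D1C qU f W c1 y1 = ∑ m', gDec1 qU f W c1 y1 m' from (sum_gDec1 qU f W c1 y1).symm]
  exact mkPMF_ge (gDec1 qU f W c1 y1) (fun m => Finset.sum_nonneg fun _ _ => s1Aux_nonneg qU f W _ _) m

/-- unnormalized decoder-2 weights -/
noncomputable def gDec2 (c2 : Fin M2 × Fin J2 → U2) (y2 : Y2) (m : Fin M2) : ℝ :=
  ∑ j, s2Aux qU f W (c2 (m, j)) y2

noncomputable def D2C (c2 : Fin M2 × Fin J2 → U2) (y2 : Y2) : ℝ :=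
  ∑ i, s2Aux qU f W (c2 i) y2

lemma D2C_nonneg (c2 : Fin M2 × Fin J2 → U2) (y2) : 0 ≤ D2C qU f W c2 y2 :=
  Finset.sum_nonneg fun _ _ => s2Aux_nonneg qU f W _ _

lemma sum_gDec2 (c2 : Fin M2 × Fin J2 → U2) (y2) :
    ∑ m, gDec2 qU f W c2 y2 m = D2C qU f W c2 y2 := by
  unfold gDec2 D2C
  exact (Fintype.sum_prod_type (f := fun i => s2Aux qU f W (c2 i) y2)).symm

noncomputable def dec2C [Nonempty (Fin M2)] (c2 : Fin M2 × Fin J2 → U2) (y2 : Y2) :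
    FinPMF (Fin M2) :=
  mkPMF (gDec2 qU f W c2 y2) (fun m => Finset.sum_nonneg fun _ _ => s2Aux_nonneg qU f W _ _)

lemma dec2C_ge [Nonempty (Fin M2)] (c2 : Fin M2 × Fin J2 → U2) (y2) (m : Fin M2) (j : Fin J2) :
    s2Aux qU f W (c2 (m, j)) y2 / D2C qU f W c2 y2 ≤ (dec2C qU f W c2 y2).p m := by
  refine le_trans (div_le_div_nonneg_denom
    (Finset.single_le_sum (f := fun j' => s2Aux qU f W (c2 (m, j')) y2)
      (fun j' _ => s2Aux_nonneg qU f W _ _) (Finset.mem_univ j))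
    (D2C_nonneg qU f W c2 y2)) ?_
  rw [show D2C qU f W c2 y2 = ∑ m', gDec2 qU f W c2 y2 m' from (sum_gDec2 qU f W c2 y2).symm]
  exact mkPMF_ge (gDec2 qU f W c2 y2) (fun m => Finset.sum_nonneg fun _ _ => s2Aux_nonneg qU f W _ _) m

end MBcode

section MBphi
variable (qU : FinPMF (U1 × U2)) (f : U1 → U2 → X) (W : X → FinPMF (Y1 × Y2))
  (M1 M2 J1 J2 : ℕ)

noncomputable def NN (u1 : U1) (u2 : U2) (y1 : Y1) (y2 : Y2) : ℝ :=
  rAux qU u1 u2 * (W (f u1 u2)).p (y1, y2) * s1Aux qU f W u1 y1 *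
    s2Aux qU f W u2 y2

lemma NN_nonneg (u1 u2 y1 y2) : 0 ≤ NN qU f W u1 u2 y1 y2 :=
  mul_nonneg (mul_nonneg (mul_nonneg (rAux_nonneg qU _ _) ((W _).nonneg _))
    (s1Aux_nonneg qU f W _ _)) (s2Aux_nonneg qU f W _ _)

noncomputable def Phi0 (u1 : U1) (u2 : U2) (y1 : Y1) (y2 : Y2) : ℝ :=
  NN qU f W u1 u2 y1 y2 /
    ((rAux qU u1 u2 + ((J1 : ℝ) * (J2 : ℝ) - 1)) *
     (s1Aux qU f W u1 y1 + ((M1 : ℝ) * (J1 : ℝ) - 1)) *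
     (s2Aux qU f W u2 y2 + ((M2 : ℝ) * (J2 : ℝ) - 1)))

noncomputable def Phi1 (u1 : U1) (u2 : U2) (y1 : Y1) (y2 : Y2) : ℝ :=
  Phi0 qU f W M1 M2 J1 J2 u1 u2 y1 y2 / (rAux qU u1 u2 + ((J1 : ℝ) * (J2 : ℝ) - 1))

noncomputable def Phi2 (u1 : U1) (u2 : U2) (y1 : Y1) (y2 : Y2) : ℝ :=
  Phi0 qU f W M1 M2 J1 J2 u1 u2 y1 y2 / (s1Aux qU f W u1 y1 + ((M1 : ℝ) * (J1 : ℝ) - 1))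

noncomputable def Phi3 (u1 : U1) (u2 : U2) (y1 : Y1) (y2 : Y2) : ℝ :=
  Phi0 qU f W M1 M2 J1 J2 u1 u2 y1 y2 / (s2Aux qU f W u2 y2 + ((M2 : ℝ) * (J2 : ℝ) - 1))

noncomputable def PT (u1 : U1) (u2 : U2) (y1 : Y1) (y2 : Y2) : ℝ :=
  mU1 qU u1 * mU2 qU u2 *
    (NN qU f W u1 u2 y1 y2 /
      ((rAux qU u1 u2 + (J1 : ℝ) * (J2 : ℝ)) *
       (s1Aux qU f W u1 y1 + (M1 : ℝ) * (J1 : ℝ)) *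
       (s2Aux qU f W u2 y2 + (M2 : ℝ) * (J2 : ℝ))))

lemma oneleJJ (hJ1 : 0 < J1) (hJ2 : 0 < J2) : (1 : ℝ) ≤ (J1 : ℝ) * (J2 : ℝ) := by
  have : 1 ≤ J1 * J2 := Nat.one_le_iff_ne_zero.mpr (Nat.mul_ne_zero hJ1.ne' hJ2.ne')
  exact_mod_cast this

lemma oneleMJ1 (hM1 : 0 < M1) (hJ1 : 0 < J1) : (1 : ℝ) ≤ (M1 : ℝ) * (J1 : ℝ) := by
  have : 1 ≤ M1 * J1 := Nat.one_le_iff_ne_zero.mpr (Nat.mul_ne_zero hM1.ne' hJ1.ne')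
  exact_mod_cast this

lemma oneleMJ2 (hM2 : 0 < M2) (hJ2 : 0 < J2) : (1 : ℝ) ≤ (M2 : ℝ) * (J2 : ℝ) := by
  have : 1 ≤ M2 * J2 := Nat.one_le_iff_ne_zero.mpr (Nat.mul_ne_zero hM2.ne' hJ2.ne')
  exact_mod_cast this

lemma Phi0_nonneg (hM1 : 0 < M1) (hM2 : 0 < M2) (hJ1 : 0 < J1) (hJ2 : 0 < J2) (u1 u2 y1 y2) : 0 ≤ Phi0 qU f W M1 M2 J1 J2 u1 u2 y1 y2 := by
  refine div_nonneg (NN_nonneg qU f W _ _ _ _) ?_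
  have h0 := oneleJJ J1 J2 hJ1 hJ2
  have h1 := oneleMJ1 M1 J1 hM1 hJ1
  have h2 := oneleMJ2 M2 J2 hM2 hJ2
  have := rAux_nonneg qU u1 u2
  have := s1Aux_nonneg qU f W u1 y1
  have := s2Aux_nonneg qU f W u2 y2
  have l0 : (0:ℝ) ≤ rAux qU u1 u2 + ((J1 : ℝ) * (J2 : ℝ) - 1) := by linarith
  have l1 : (0:ℝ) ≤ s1Aux qU f W u1 y1 + ((M1 : ℝ) * (J1 : ℝ) - 1) := by linarith
  have l2 : (0:ℝ) ≤ s2Aux qU f W u2 y2 + ((M2 : ℝ) * (J2 : ℝ) - 1) := by linarith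
  positivity

lemma Phi1_nonneg (hM1 : 0 < M1) (hM2 : 0 < M2) (hJ1 : 0 < J1) (hJ2 : 0 < J2) (u1 u2 y1 y2) : 0 ≤ Phi1 qU f W M1 M2 J1 J2 u1 u2 y1 y2 := by
  refine div_nonneg (Phi0_nonneg qU f W M1 M2 J1 J2 hM1 hM2 hJ1 hJ2 u1 u2 y1 y2) ?_
  have h0 := oneleJJ J1 J2 hJ1 hJ2
  have := rAux_nonneg qU u1 u2
  linarith

lemma Phi2_nonneg (hM1 : 0 < M1) (hM2 : 0 < M2) (hJ1 : 0 < J1) (hJ2 : 0 < J2) (u1 u2 y1 y2) : 0 ≤ Phi2 qU f W M1 M2 J1 J2 u1 u2 y1 y2 := by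
  refine div_nonneg (Phi0_nonneg qU f W M1 M2 J1 J2 hM1 hM2 hJ1 hJ2 u1 u2 y1 y2) ?_
  have h1 := oneleMJ1 M1 J1 hM1 hJ1
  have := s1Aux_nonneg qU f W u1 y1
  linarith

lemma Phi3_nonneg (hM1 : 0 < M1) (hM2 : 0 < M2) (hJ1 : 0 < J1) (hJ2 : 0 < J2) (u1 u2 y1 y2) : 0 ≤ Phi3 qU f W M1 M2 J1 J2 u1 u2 y1 y2 := by
  refine div_nonneg (Phi0_nonneg qU f W M1 M2 J1 J2 hM1 hM2 hJ1 hJ2 u1 u2 y1 y2) ?_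
  have h2 := oneleMJ2 M2 J2 hM2 hJ2
  have := s2Aux_nonneg qU f W u2 y2
  linarith

lemma PT_nonneg (hM1 : 0 < M1) (hM2 : 0 < M2) (hJ1 : 0 < J1) (hJ2 : 0 < J2) (u1 u2 y1 y2) : 0 ≤ PT qU f W M1 M2 J1 J2 u1 u2 y1 y2 := by
  have h0 := oneleJJ J1 J2 hJ1 hJ2
  have h1 := oneleMJ1 M1 J1 hM1 hJ1
  have h2 := oneleMJ2 M2 J2 hM2 hJ2
  have n0 := rAux_nonneg qU u1 u2
  have n1 := s1Aux_nonneg qU f W u1 y1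
  have n2 := s2Aux_nonneg qU f W u2 y2
  refine mul_nonneg (mul_nonneg (mU1_nonneg qU _) (mU2_nonneg qU _)) ?_
  refine div_nonneg (NN_nonneg qU f W _ _ _ _) ?_
  have l0 : (0:ℝ) ≤ rAux qU u1 u2 + (J1 : ℝ) * (J2 : ℝ) := by linarith
  have l1 : (0:ℝ) ≤ s1Aux qU f W u1 y1 + (M1 : ℝ) * (J1 : ℝ) := by linarith
  have l2 : (0:ℝ) ≤ s2Aux qU f W u2 y2 + (M2 : ℝ) * (J2 : ℝ) := by linarith
  positivity

end MBphi

section MBexpect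
variable {U1 U2 : Type} [Fintype U1] [Fintype U2]

lemma SB_le (m1 : U1 → ℝ) (m2 : U2 → ℝ) (hm1 : ∀ u, 0 ≤ m1 u)
    (Φ : U1 → U2 → ℝ) (hΦ : ∀ u v, 0 ≤ m2 v * Φ u v) (B : U1 → ℝ)
    (hB : ∀ u, B u ≤ 1) (hB0 : ∀ u, 0 ≤ B u) :
    ∑ u, m1 u * ((∑ v, m2 v * Φ u v) * B u) ≤ ∑ u, ∑ v, m1 u * m2 v * Φ u v := by
  refine Finset.sum_le_sum fun u _ => ?_
  have h1 : (∑ v, m2 v * Φ u v) * B u ≤ ∑ v, m2 v * Φ u v :=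
    mul_le_of_le_one_right (Finset.sum_nonneg fun v _ => hΦ u v) (hB u)
  calc m1 u * ((∑ v, m2 v * Φ u v) * B u) ≤ m1 u * ∑ v, m2 v * Φ u v :=
      mul_le_mul_of_nonneg_left h1 (hm1 u)
    _ = ∑ v, m1 u * m2 v * Φ u v := by
      rw [Finset.mul_sum]; exact Finset.sum_congr rfl fun v _ => by ring

lemma SB_le' (m1 : U1 → ℝ) (m2 : U2 → ℝ) (hm2 : ∀ v, 0 ≤ m2 v)
    (Φ : U1 → U2 → ℝ) (hΦ : ∀ u v, 0 ≤ m1 u * Φ u v) (B : U2 → ℝ)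
    (hB : ∀ v, B v ≤ 1) (hB0 : ∀ v, 0 ≤ B v) :
    ∑ v, m2 v * ((∑ u, m1 u * Φ u v) * B v) ≤ ∑ u, ∑ v, m1 u * m2 v * Φ u v := by
  rw [Finset.sum_comm]
  refine Finset.sum_le_sum fun v _ => ?_
  have h1 : (∑ u, m1 u * Φ u v) * B v ≤ ∑ u, m1 u * Φ u v :=
    mul_le_of_le_one_right (Finset.sum_nonneg fun u _ => hΦ u v) (hB v)
  calc m2 v * ((∑ u, m1 u * Φ u v) * B v) ≤ m2 v * ∑ u, m1 u * Φ u v :=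
      mul_le_mul_of_nonneg_left h1 (hm2 v)
    _ = ∑ u, m1 u * m2 v * Φ u v := by
      rw [Finset.mul_sum]; exact Finset.sum_congr rfl fun u _ => by ring

end MBexpect

section MBEG
variable (qU : FinPMF (U1 × U2)) (f : U1 → U2 → X) (W : X → FinPMF (Y1 × Y2))
  (M1 M2 J1 J2 : ℕ)

lemma EG (hM1 : 0 < M1) (hM2 : 0 < M2) (hJ1 : 0 < J1) (hJ2 : 0 < J2)
    (a : Fin M1) (b : Fin M2) (j1 : Fin J1) (j2 : Fin J2) (y1 : Y1) (y2 : Y2) :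
    ∑ c : (Fin M1 × Fin J1 → U1) × (Fin M2 × Fin J2 → U2),
        ((∏ i, mU1 qU (c.1 i)) * ∏ i, mU2 qU (c.2 i)) *
        (Phi1 qU f W M1 M2 J1 J2 (c.1 (a, j1)) (c.2 (b, j2)) y1 y2 * GC qU c (a, b))
    ≤ (∑ u, ∑ v, mU1 qU u * mU2 qU v *
        (Phi1 qU f W M1 M2 J1 J2 u v y1 y2 * rAux qU u v))
      + ((J1 : ℝ) * (J2 : ℝ) - 1) *
        ∑ u, ∑ v, mU1 qU u * mU2 qU v * Phi1 qU f W M1 M2 J1 J2 u v y1 y2 := by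
  have hm1s := sum_mU1 qU
  have hm2s := sum_mU2 qU
  have hm1n : ∀ u, 0 ≤ mU1 qU u := mU1_nonneg qU
  have hm2n : ∀ v, 0 ≤ mU2 qU v := mU2_nonneg qU
  have hφ : ∀ u v, 0 ≤ Phi1 qU f W M1 M2 J1 J2 u v y1 y2 :=
    fun u v => Phi1_nonneg qU f W M1 M2 J1 J2 hM1 hM2 hJ1 hJ2 u v y1 y2
  set S1 : ℝ := ∑ u, ∑ v, mU1 qU u * mU2 qU v * Phi1 qU f W M1 M2 J1 J2 u v y1 y2 with hS1
  have hS1n : 0 ≤ S1 := Finset.sum_nonneg fun u _ => Finset.sum_nonneg fun v _ =>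
    mul_nonneg (mul_nonneg (hm1n u) (hm2n v)) (hφ u v)
  -- rewrite `GC` as a sum over pairs and push everything inside
  have step1 : ∑ c : (Fin M1 × Fin J1 → U1) × (Fin M2 × Fin J2 → U2),
      ((∏ i, mU1 qU (c.1 i)) * ∏ i, mU2 qU (c.2 i)) *
        (Phi1 qU f W M1 M2 J1 J2 (c.1 (a, j1)) (c.2 (b, j2)) y1 y2 * GC qU c (a, b))
      = ∑ p : Fin J1 × Fin J2, ∑ c : (Fin M1 × Fin J1 → U1) × (Fin M2 × Fin J2 → U2),
          ((∏ i, mU1 qU (c.1 i)) * ∏ i, mU2 qU (c.2 i)) *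
          (Phi1 qU f W M1 M2 J1 J2 (c.1 (a, j1)) (c.2 (b, j2)) y1 y2 *
            rAux qU (c.1 (a, p.1)) (c.2 (b, p.2))) := by
    rw [Finset.sum_comm]
    refine Finset.sum_congr rfl fun c _ => ?_
    have hGC : GC qU c (a, b)
        = ∑ p : Fin J1 × Fin J2, rAux qU (c.1 (a, p.1)) (c.2 (b, p.2)) :=
      (Fintype.sum_prod_type (f := fun p : Fin J1 × Fin J2 =>
        rAux qU (c.1 (a, p.1)) (c.2 (b, p.2)))).symm
    rw [hGC, Finset.mul_sum, Finset.mul_sum]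
  -- per-pair bound for the off-diagonal terms
  have hoff : ∀ p : Fin J1 × Fin J2, p ≠ (j1, j2) →
      ∑ c : (Fin M1 × Fin J1 → U1) × (Fin M2 × Fin J2 → U2),
        ((∏ i, mU1 qU (c.1 i)) * ∏ i, mU2 qU (c.2 i)) *
        (Phi1 qU f W M1 M2 J1 J2 (c.1 (a, j1)) (c.2 (b, j2)) y1 y2 *
          rAux qU (c.1 (a, p.1)) (c.2 (b, p.2))) ≤ S1 := by
    rintro ⟨p1, p2⟩ hp
    by_cases h1 : p1 = j1
    · subst h1
      have h2 : p2 ≠ j2 := fun h => hp (by rw [h])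
      have hne : (b, j2) ≠ (b, p2) := fun h => h2 (by injection h with _ h; exact h.symm)
      rw [W12 (mU1 qU) (mU2 qU) hm1s hm2s (a, p1) hne
        (fun u v => Phi1 qU f W M1 M2 J1 J2 u v y1 y2) (fun u v => rAux qU u v)]
      refine SB_le (mU1 qU) (mU2 qU) hm1n _
        (fun u v => mul_nonneg (hm2n v) (hφ u v)) _ (fun u => E3 qU u)
        (fun u => Finset.sum_nonneg fun v _ => mul_nonneg (hm2n v) (rAux_nonneg qU u v))
    · by_cases h2 : p2 = j2
      · subst h2
        have hne : (a, j1) ≠ (a, p1) :=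
          fun h => h1 (by injection h with _ h; exact h.symm)
        rw [W21 (mU1 qU) (mU2 qU) hm1s hm2s hne (b, p2)
          (fun u v => Phi1 qU f W M1 M2 J1 J2 u v y1 y2) (fun u v => rAux qU u v)]
        refine SB_le' (mU1 qU) (mU2 qU) hm2n _
          (fun u v => mul_nonneg (hm1n u) (hφ u v)) _ (fun v => E4 qU v)
          (fun v => Finset.sum_nonneg fun u _ => mul_nonneg (hm1n u) (rAux_nonneg qU u v))
      · have hne : (a, j1) ≠ (a, p1) :=
          fun h => h1 (by injection h with _ h; exact h.symm)
        have hne2 : (b, j2) ≠ (b, p2) :=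
          fun h => h2 (by injection h with _ h; exact h.symm)
        rw [W22 (mU1 qU) (mU2 qU) hm1s hm2s hne hne2
          (fun u v => Phi1 qU f W M1 M2 J1 J2 u v y1 y2) (fun u v => rAux qU u v)]
        exact mul_le_of_le_one_right hS1n (E5 qU)
  -- assemble
  rw [step1]
  have hsplit : ∑ p : Fin J1 × Fin J2, ∑ c : (Fin M1 × Fin J1 → U1) × (Fin M2 × Fin J2 → U2),
      ((∏ i, mU1 qU (c.1 i)) * ∏ i, mU2 qU (c.2 i)) *
      (Phi1 qU f W M1 M2 J1 J2 (c.1 (a, j1)) (c.2 (b, j2)) y1 y2 *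
        rAux qU (c.1 (a, p.1)) (c.2 (b, p.2)))
      = (∑ c : (Fin M1 × Fin J1 → U1) × (Fin M2 × Fin J2 → U2),
          ((∏ i, mU1 qU (c.1 i)) * ∏ i, mU2 qU (c.2 i)) *
          (Phi1 qU f W M1 M2 J1 J2 (c.1 (a, j1)) (c.2 (b, j2)) y1 y2 *
            rAux qU (c.1 (a, j1)) (c.2 (b, j2))))
        + ∑ p ∈ Finset.univ.erase (j1, j2),
            ∑ c : (Fin M1 × Fin J1 → U1) × (Fin M2 × Fin J2 → U2),
            ((∏ i, mU1 qU (c.1 i)) * ∏ i, mU2 qU (c.2 i)) *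
            (Phi1 qU f W M1 M2 J1 J2 (c.1 (a, j1)) (c.2 (b, j2)) y1 y2 *
              rAux qU (c.1 (a, p.1)) (c.2 (b, p.2))) := by
    exact (Finset.add_sum_erase Finset.univ _ (Finset.mem_univ (j1, j2))).symm
  rw [hsplit]
  have hdiag : ∑ c : (Fin M1 × Fin J1 → U1) × (Fin M2 × Fin J2 → U2),
      ((∏ i, mU1 qU (c.1 i)) * ∏ i, mU2 qU (c.2 i)) *
      (Phi1 qU f W M1 M2 J1 J2 (c.1 (a, j1)) (c.2 (b, j2)) y1 y2 *
        rAux qU (c.1 (a, j1)) (c.2 (b, j2)))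
      = ∑ u, ∑ v, mU1 qU u * mU2 qU v *
        (Phi1 qU f W M1 M2 J1 J2 u v y1 y2 * rAux qU u v) :=
    W11 (mU1 qU) (mU2 qU) hm1s hm2s (a, j1) (b, j2)
      (fun u v => Phi1 qU f W M1 M2 J1 J2 u v y1 y2 * rAux qU u v)
  rw [hdiag]
  refine add_le_add le_rfl ?_
  calc ∑ p ∈ Finset.univ.erase (j1, j2),
      ∑ c : (Fin M1 × Fin J1 → U1) × (Fin M2 × Fin J2 → U2),
        ((∏ i, mU1 qU (c.1 i)) * ∏ i, mU2 qU (c.2 i)) *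
        (Phi1 qU f W M1 M2 J1 J2 (c.1 (a, j1)) (c.2 (b, j2)) y1 y2 *
          rAux qU (c.1 (a, p.1)) (c.2 (b, p.2)))
      ≤ ∑ p ∈ Finset.univ.erase (j1, j2), S1 :=
      Finset.sum_le_sum fun p hp => hoff p (Finset.ne_of_mem_erase hp)
    _ = ((J1 : ℝ) * (J2 : ℝ) - 1) * S1 := by
      rw [Finset.sum_const, nsmul_eq_mul, Finset.card_erase_of_mem (Finset.mem_univ _),
        Finset.card_univ]
      congr 1
      have : Fintype.card (Fin J1 × Fin J2) = J1 * J2 := by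
        simp [Fintype.card_prod]
      rw [this, Nat.cast_sub (Nat.one_le_iff_ne_zero.mpr (Nat.mul_ne_zero hJ1.ne' hJ2.ne'))]
      push_cast
      ring
end MBEG

section MBED
variable (qU : FinPMF (U1 × U2)) (f : U1 → U2 → X) (W : X → FinPMF (Y1 × Y2))
  (M1 M2 J1 J2 : ℕ)

lemma ED1 (hM1 : 0 < M1) (hM2 : 0 < M2) (hJ1 : 0 < J1) (hJ2 : 0 < J2)
    (a : Fin M1) (b : Fin M2) (j1 : Fin J1) (j2 : Fin J2) (y1 : Y1) (y2 : Y2) :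
    ∑ c : (Fin M1 × Fin J1 → U1) × (Fin M2 × Fin J2 → U2),
        ((∏ i, mU1 qU (c.1 i)) * ∏ i, mU2 qU (c.2 i)) *
        (Phi2 qU f W M1 M2 J1 J2 (c.1 (a, j1)) (c.2 (b, j2)) y1 y2 * D1C qU f W c.1 y1)
    ≤ (∑ u, ∑ v, mU1 qU u * mU2 qU v *
        (Phi2 qU f W M1 M2 J1 J2 u v y1 y2 * s1Aux qU f W u y1))
      + ((M1 : ℝ) * (J1 : ℝ) - 1) *
        ∑ u, ∑ v, mU1 qU u * mU2 qU v * Phi2 qU f W M1 M2 J1 J2 u v y1 y2 := by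
  have hm1s := sum_mU1 qU
  have hm2s := sum_mU2 qU
  have hm1n : ∀ u, 0 ≤ mU1 qU u := mU1_nonneg qU
  have hm2n : ∀ v, 0 ≤ mU2 qU v := mU2_nonneg qU
  have hφ : ∀ u v, 0 ≤ Phi2 qU f W M1 M2 J1 J2 u v y1 y2 :=
    fun u v => Phi2_nonneg qU f W M1 M2 J1 J2 hM1 hM2 hJ1 hJ2 u v y1 y2
  set S2 : ℝ := ∑ u, ∑ v, mU1 qU u * mU2 qU v * Phi2 qU f W M1 M2 J1 J2 u v y1 y2 with hS2
  have hS2n : 0 ≤ S2 := Finset.sum_nonneg fun u _ => Finset.sum_nonneg fun v _ =>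
    mul_nonneg (mul_nonneg (hm1n u) (hm2n v)) (hφ u v)
  have step1 : ∑ c : (Fin M1 × Fin J1 → U1) × (Fin M2 × Fin J2 → U2),
      ((∏ i, mU1 qU (c.1 i)) * ∏ i, mU2 qU (c.2 i)) *
        (Phi2 qU f W M1 M2 J1 J2 (c.1 (a, j1)) (c.2 (b, j2)) y1 y2 * D1C qU f W c.1 y1)
      = ∑ i0 : Fin M1 × Fin J1, ∑ c : (Fin M1 × Fin J1 → U1) × (Fin M2 × Fin J2 → U2),
          ((∏ i, mU1 qU (c.1 i)) * ∏ i, mU2 qU (c.2 i)) *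
          (Phi2 qU f W M1 M2 J1 J2 (c.1 (a, j1)) (c.2 (b, j2)) y1 y2 *
            s1Aux qU f W (c.1 i0) y1) := by
    rw [Finset.sum_comm]
    refine Finset.sum_congr rfl fun c _ => ?_
    have hD : D1C qU f W c.1 y1 = ∑ i0 : Fin M1 × Fin J1, s1Aux qU f W (c.1 i0) y1 := rfl
    rw [hD, Finset.mul_sum, Finset.mul_sum]
  have hoff : ∀ i0 : Fin M1 × Fin J1, i0 ≠ (a, j1) →
      ∑ c : (Fin M1 × Fin J1 → U1) × (Fin M2 × Fin J2 → U2),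
        ((∏ i, mU1 qU (c.1 i)) * ∏ i, mU2 qU (c.2 i)) *
        (Phi2 qU f W M1 M2 J1 J2 (c.1 (a, j1)) (c.2 (b, j2)) y1 y2 *
          s1Aux qU f W (c.1 i0) y1) ≤ S2 := by
    intro i0 hi0
    have hne : (a, j1) ≠ i0 := fun h => hi0 h.symm
    rw [W21 (mU1 qU) (mU2 qU) hm1s hm2s hne (b, j2)
      (fun u v => Phi2 qU f W M1 M2 J1 J2 u v y1 y2) (fun u v => s1Aux qU f W u y1)]
    refine SB_le' (mU1 qU) (mU2 qU) hm2n _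
      (fun u v => mul_nonneg (hm1n u) (hφ u v)) _ (fun v => E1 qU f W y1)
      (fun v => Finset.sum_nonneg fun u _ => mul_nonneg (hm1n u) (s1Aux_nonneg qU f W u y1))
  rw [step1, ← Finset.add_sum_erase Finset.univ _ (Finset.mem_univ (a, j1))]
  have hdiag : ∑ c : (Fin M1 × Fin J1 → U1) × (Fin M2 × Fin J2 → U2),
      ((∏ i, mU1 qU (c.1 i)) * ∏ i, mU2 qU (c.2 i)) *
      (Phi2 qU f W M1 M2 J1 J2 (c.1 (a, j1)) (c.2 (b, j2)) y1 y2 *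
        s1Aux qU f W (c.1 (a, j1)) y1)
      = ∑ u, ∑ v, mU1 qU u * mU2 qU v *
        (Phi2 qU f W M1 M2 J1 J2 u v y1 y2 * s1Aux qU f W u y1) :=
    W11 (mU1 qU) (mU2 qU) hm1s hm2s (a, j1) (b, j2)
      (fun u v => Phi2 qU f W M1 M2 J1 J2 u v y1 y2 * s1Aux qU f W u y1)
  rw [hdiag]
  refine add_le_add le_rfl ?_
  calc ∑ i0 ∈ Finset.univ.erase (a, j1),
      ∑ c : (Fin M1 × Fin J1 → U1) × (Fin M2 × Fin J2 → U2),
        ((∏ i, mU1 qU (c.1 i)) * ∏ i, mU2 qU (c.2 i)) *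
        (Phi2 qU f W M1 M2 J1 J2 (c.1 (a, j1)) (c.2 (b, j2)) y1 y2 *
          s1Aux qU f W (c.1 i0) y1)
      ≤ ∑ i0 ∈ Finset.univ.erase (a, j1), S2 :=
      Finset.sum_le_sum fun i0 hi0 => hoff i0 (Finset.ne_of_mem_erase hi0)
    _ = ((M1 : ℝ) * (J1 : ℝ) - 1) * S2 := by
      rw [Finset.sum_const, nsmul_eq_mul, Finset.card_erase_of_mem (Finset.mem_univ _),
        Finset.card_univ]
      congr 1
      have : Fintype.card (Fin M1 × Fin J1) = M1 * J1 := by simp [Fintype.card_prod]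
      rw [this, Nat.cast_sub (Nat.one_le_iff_ne_zero.mpr (Nat.mul_ne_zero hM1.ne' hJ1.ne'))]
      push_cast
      ring

lemma ED2 (hM1 : 0 < M1) (hM2 : 0 < M2) (hJ1 : 0 < J1) (hJ2 : 0 < J2)
    (a : Fin M1) (b : Fin M2) (j1 : Fin J1) (j2 : Fin J2) (y1 : Y1) (y2 : Y2) :
    ∑ c : (Fin M1 × Fin J1 → U1) × (Fin M2 × Fin J2 → U2),
        ((∏ i, mU1 qU (c.1 i)) * ∏ i, mU2 qU (c.2 i)) *
        (Phi3 qU f W M1 M2 J1 J2 (c.1 (a, j1)) (c.2 (b, j2)) y1 y2 * D2C qU f W c.2 y2)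
    ≤ (∑ u, ∑ v, mU1 qU u * mU2 qU v *
        (Phi3 qU f W M1 M2 J1 J2 u v y1 y2 * s2Aux qU f W v y2))
      + ((M2 : ℝ) * (J2 : ℝ) - 1) *
        ∑ u, ∑ v, mU1 qU u * mU2 qU v * Phi3 qU f W M1 M2 J1 J2 u v y1 y2 := by
  have hm1s := sum_mU1 qU
  have hm2s := sum_mU2 qU
  have hm1n : ∀ u, 0 ≤ mU1 qU u := mU1_nonneg qU
  have hm2n : ∀ v, 0 ≤ mU2 qU v := mU2_nonneg qU
  have hφ : ∀ u v, 0 ≤ Phi3 qU f W M1 M2 J1 J2 u v y1 y2 :=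
    fun u v => Phi3_nonneg qU f W M1 M2 J1 J2 hM1 hM2 hJ1 hJ2 u v y1 y2
  set S3 : ℝ := ∑ u, ∑ v, mU1 qU u * mU2 qU v * Phi3 qU f W M1 M2 J1 J2 u v y1 y2 with hS3
  have hS3n : 0 ≤ S3 := Finset.sum_nonneg fun u _ => Finset.sum_nonneg fun v _ =>
    mul_nonneg (mul_nonneg (hm1n u) (hm2n v)) (hφ u v)
  have step1 : ∑ c : (Fin M1 × Fin J1 → U1) × (Fin M2 × Fin J2 → U2),
      ((∏ i, mU1 qU (c.1 i)) * ∏ i, mU2 qU (c.2 i)) *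
        (Phi3 qU f W M1 M2 J1 J2 (c.1 (a, j1)) (c.2 (b, j2)) y1 y2 * D2C qU f W c.2 y2)
      = ∑ i0 : Fin M2 × Fin J2, ∑ c : (Fin M1 × Fin J1 → U1) × (Fin M2 × Fin J2 → U2),
          ((∏ i, mU1 qU (c.1 i)) * ∏ i, mU2 qU (c.2 i)) *
          (Phi3 qU f W M1 M2 J1 J2 (c.1 (a, j1)) (c.2 (b, j2)) y1 y2 *
            s2Aux qU f W (c.2 i0) y2) := by
    rw [Finset.sum_comm]
    refine Finset.sum_congr rfl fun c _ => ?_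
    have hD : D2C qU f W c.2 y2 = ∑ i0 : Fin M2 × Fin J2, s2Aux qU f W (c.2 i0) y2 := rfl
    rw [hD, Finset.mul_sum, Finset.mul_sum]
  have hoff : ∀ i0 : Fin M2 × Fin J2, i0 ≠ (b, j2) →
      ∑ c : (Fin M1 × Fin J1 → U1) × (Fin M2 × Fin J2 → U2),
        ((∏ i, mU1 qU (c.1 i)) * ∏ i, mU2 qU (c.2 i)) *
        (Phi3 qU f W M1 M2 J1 J2 (c.1 (a, j1)) (c.2 (b, j2)) y1 y2 *
          s2Aux qU f W (c.2 i0) y2) ≤ S3 := by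
    intro i0 hi0
    have hne : (b, j2) ≠ i0 := fun h => hi0 h.symm
    rw [W12 (mU1 qU) (mU2 qU) hm1s hm2s (a, j1) hne
      (fun u v => Phi3 qU f W M1 M2 J1 J2 u v y1 y2) (fun u v => s2Aux qU f W v y2)]
    refine SB_le (mU1 qU) (mU2 qU) hm1n _
      (fun u v => mul_nonneg (hm2n v) (hφ u v)) _ (fun u => E2 qU f W y2)
      (fun u => Finset.sum_nonneg fun v _ => mul_nonneg (hm2n v) (s2Aux_nonneg qU f W v y2))
  rw [step1, ← Finset.add_sum_erase Finset.univ _ (Finset.mem_univ (b, j2))]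
  have hdiag : ∑ c : (Fin M1 × Fin J1 → U1) × (Fin M2 × Fin J2 → U2),
      ((∏ i, mU1 qU (c.1 i)) * ∏ i, mU2 qU (c.2 i)) *
      (Phi3 qU f W M1 M2 J1 J2 (c.1 (a, j1)) (c.2 (b, j2)) y1 y2 *
        s2Aux qU f W (c.2 (b, j2)) y2)
      = ∑ u, ∑ v, mU1 qU u * mU2 qU v *
        (Phi3 qU f W M1 M2 J1 J2 u v y1 y2 * s2Aux qU f W v y2) :=
    W11 (mU1 qU) (mU2 qU) hm1s hm2s (a, j1) (b, j2)
      (fun u v => Phi3 qU f W M1 M2 J1 J2 u v y1 y2 * s2Aux qU f W v y2)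
  rw [hdiag]
  refine add_le_add le_rfl ?_
  calc ∑ i0 ∈ Finset.univ.erase (b, j2),
      ∑ c : (Fin M1 × Fin J1 → U1) × (Fin M2 × Fin J2 → U2),
        ((∏ i, mU1 qU (c.1 i)) * ∏ i, mU2 qU (c.2 i)) *
        (Phi3 qU f W M1 M2 J1 J2 (c.1 (a, j1)) (c.2 (b, j2)) y1 y2 *
          s2Aux qU f W (c.2 i0) y2)
      ≤ ∑ i0 ∈ Finset.univ.erase (b, j2), S3 :=
      Finset.sum_le_sum fun i0 hi0 => hoff i0 (Finset.ne_of_mem_erase hi0)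
    _ = ((M2 : ℝ) * (J2 : ℝ) - 1) * S3 := by
      rw [Finset.sum_const, nsmul_eq_mul, Finset.card_erase_of_mem (Finset.mem_univ _),
        Finset.card_univ]
      congr 1
      have : Fintype.card (Fin M2 × Fin J2) = M2 * J2 := by simp [Fintype.card_prod]
      rw [this, Nat.cast_sub (Nat.one_le_iff_ne_zero.mpr (Nat.mul_ne_zero hM2.ne' hJ2.ne'))]
      push_cast
      ring

end MBED

section MBmainbound
variable (qU : FinPMF (U1 × U2)) (f : U1 → U2 → X) (W : X → FinPMF (Y1 × Y2))
  (M1 M2 J1 J2 : ℕ)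

lemma main_pt (hM1 : 0 < M1) (hM2 : 0 < M2) (hJ1 : 0 < J1) (hJ2 : 0 < J2)
    (u : U1) (v : U2) (y1 : Y1) (y2 : Y2) :
    PT qU f W M1 M2 J1 J2 u v y1 y2
    ≤ 4 * (mU1 qU u * mU2 qU v * Phi0 qU f W M1 M2 J1 J2 u v y1 y2)
      - mU1 qU u * mU2 qU v * (Phi1 qU f W M1 M2 J1 J2 u v y1 y2 * rAux qU u v)
      - ((J1 : ℝ) * (J2 : ℝ) - 1) *
          (mU1 qU u * mU2 qU v * Phi1 qU f W M1 M2 J1 J2 u v y1 y2)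
      - mU1 qU u * mU2 qU v * (Phi2 qU f W M1 M2 J1 J2 u v y1 y2 * s1Aux qU f W u y1)
      - ((M1 : ℝ) * (J1 : ℝ) - 1) *
          (mU1 qU u * mU2 qU v * Phi2 qU f W M1 M2 J1 J2 u v y1 y2)
      - mU1 qU u * mU2 qU v * (Phi3 qU f W M1 M2 J1 J2 u v y1 y2 * s2Aux qU f W v y2)
      - ((M2 : ℝ) * (J2 : ℝ) - 1) *
          (mU1 qU u * mU2 qU v * Phi3 qU f W M1 M2 J1 J2 u v y1 y2) := by
  have h0 := oneleJJ J1 J2 hJ1 hJ2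
  have h1 := oneleMJ1 M1 J1 hM1 hJ1
  have h2 := oneleMJ2 M2 J2 hM2 hJ2
  have base := pointfinal (r := rAux qU u v) (w := (W (f u v)).p (y1, y2))
    (s1 := s1Aux qU f W u y1) (s2 := s2Aux qU f W v y2)
    (K0 := (J1 : ℝ) * (J2 : ℝ) - 1) (K1 := (M1 : ℝ) * (J1 : ℝ) - 1)
    (K2 := (M2 : ℝ) * (J2 : ℝ) - 1)
    (KK0 := (J1 : ℝ) * (J2 : ℝ)) (KK1 := (M1 : ℝ) * (J1 : ℝ))
    (KK2 := (M2 : ℝ) * (J2 : ℝ))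
    (rAux_nonneg qU u v) ((W _).nonneg _) (s1Aux_nonneg qU f W u y1)
    (s2Aux_nonneg qU f W v y2) (by linarith) (by linarith) (by linarith)
    (by linarith) (by linarith) (by linarith)
  have hm : 0 ≤ mU1 qU u * mU2 qU v := mul_nonneg (mU1_nonneg qU u) (mU2_nonneg qU v)
  have step := mul_le_mul_of_nonneg_left base hm
  refine le_trans (le_of_eq ?_) (le_trans step (le_of_eq ?_))
  · rfl
  · unfold Phi1 Phi2 Phi3 Phi0 NN
    ring

lemma expect_bound (hM1 : 0 < M1) (hM2 : 0 < M2) (hJ1 : 0 < J1) (hJ2 : 0 < J2)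
    (a : Fin M1) (b : Fin M2) (j1 : Fin J1) (j2 : Fin J2) (y1 : Y1) (y2 : Y2) :
    ∑ u, ∑ v, PT qU f W M1 M2 J1 J2 u v y1 y2
    ≤ ∑ c : (Fin M1 × Fin J1 → U1) × (Fin M2 × Fin J2 → U2),
        ((∏ i, mU1 qU (c.1 i)) * ∏ i, mU2 qU (c.2 i)) *
        (4 * Phi0 qU f W M1 M2 J1 J2 (c.1 (a, j1)) (c.2 (b, j2)) y1 y2
          - Phi1 qU f W M1 M2 J1 J2 (c.1 (a, j1)) (c.2 (b, j2)) y1 y2 * GC qU c (a, b)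
          - Phi2 qU f W M1 M2 J1 J2 (c.1 (a, j1)) (c.2 (b, j2)) y1 y2 * D1C qU f W c.1 y1
          - Phi3 qU f W M1 M2 J1 J2 (c.1 (a, j1)) (c.2 (b, j2)) y1 y2 * D2C qU f W c.2 y2) := by
  have h0eq : ∑ c : (Fin M1 × Fin J1 → U1) × (Fin M2 × Fin J2 → U2),
      ((∏ i, mU1 qU (c.1 i)) * ∏ i, mU2 qU (c.2 i)) *
        Phi0 qU f W M1 M2 J1 J2 (c.1 (a, j1)) (c.2 (b, j2)) y1 y2
      = ∑ u, ∑ v, mU1 qU u * mU2 qU v * Phi0 qU f W M1 M2 J1 J2 u v y1 y2 :=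
    W11 (mU1 qU) (mU2 qU) (sum_mU1 qU) (sum_mU2 qU) (a, j1) (b, j2)
      (fun u v => Phi0 qU f W M1 M2 J1 J2 u v y1 y2)
  have hg := EG qU f W M1 M2 J1 J2 hM1 hM2 hJ1 hJ2 a b j1 j2 y1 y2
  have hd1 := ED1 qU f W M1 M2 J1 J2 hM1 hM2 hJ1 hJ2 a b j1 j2 y1 y2
  have hd2 := ED2 qU f W M1 M2 J1 J2 hM1 hM2 hJ1 hJ2 a b j1 j2 y1 y2
  have hdist : ∑ c : (Fin M1 × Fin J1 → U1) × (Fin M2 × Fin J2 → U2),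
      ((∏ i, mU1 qU (c.1 i)) * ∏ i, mU2 qU (c.2 i)) *
      (4 * Phi0 qU f W M1 M2 J1 J2 (c.1 (a, j1)) (c.2 (b, j2)) y1 y2
        - Phi1 qU f W M1 M2 J1 J2 (c.1 (a, j1)) (c.2 (b, j2)) y1 y2 * GC qU c (a, b)
        - Phi2 qU f W M1 M2 J1 J2 (c.1 (a, j1)) (c.2 (b, j2)) y1 y2 * D1C qU f W c.1 y1
        - Phi3 qU f W M1 M2 J1 J2 (c.1 (a, j1)) (c.2 (b, j2)) y1 y2 * D2C qU f W c.2 y2)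
      = 4 * (∑ c : (Fin M1 × Fin J1 → U1) × (Fin M2 × Fin J2 → U2),
            ((∏ i, mU1 qU (c.1 i)) * ∏ i, mU2 qU (c.2 i)) *
            Phi0 qU f W M1 M2 J1 J2 (c.1 (a, j1)) (c.2 (b, j2)) y1 y2)
        - (∑ c : (Fin M1 × Fin J1 → U1) × (Fin M2 × Fin J2 → U2),
            ((∏ i, mU1 qU (c.1 i)) * ∏ i, mU2 qU (c.2 i)) *
            (Phi1 qU f W M1 M2 J1 J2 (c.1 (a, j1)) (c.2 (b, j2)) y1 y2 * GC qU c (a, b)))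
        - (∑ c : (Fin M1 × Fin J1 → U1) × (Fin M2 × Fin J2 → U2),
            ((∏ i, mU1 qU (c.1 i)) * ∏ i, mU2 qU (c.2 i)) *
            (Phi2 qU f W M1 M2 J1 J2 (c.1 (a, j1)) (c.2 (b, j2)) y1 y2 * D1C qU f W c.1 y1))
        - (∑ c : (Fin M1 × Fin J1 → U1) × (Fin M2 × Fin J2 → U2),
            ((∏ i, mU1 qU (c.1 i)) * ∏ i, mU2 qU (c.2 i)) *
            (Phi3 qU f W M1 M2 J1 J2 (c.1 (a, j1)) (c.2 (b, j2)) y1 y2 * D2C qU f W c.2 y2)) := by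
    rw [Finset.mul_sum, ← Finset.sum_sub_distrib, ← Finset.sum_sub_distrib,
      ← Finset.sum_sub_distrib]
    exact Finset.sum_congr rfl fun c _ => by ring
  have hsum_pt : ∑ u, ∑ v, PT qU f W M1 M2 J1 J2 u v y1 y2
      ≤ 4 * (∑ u, ∑ v, mU1 qU u * mU2 qU v * Phi0 qU f W M1 M2 J1 J2 u v y1 y2)
        - ((∑ u, ∑ v, mU1 qU u * mU2 qU v *
            (Phi1 qU f W M1 M2 J1 J2 u v y1 y2 * rAux qU u v))
          + ((J1 : ℝ) * (J2 : ℝ) - 1) *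
            ∑ u, ∑ v, mU1 qU u * mU2 qU v * Phi1 qU f W M1 M2 J1 J2 u v y1 y2)
        - ((∑ u, ∑ v, mU1 qU u * mU2 qU v *
            (Phi2 qU f W M1 M2 J1 J2 u v y1 y2 * s1Aux qU f W u y1))
          + ((M1 : ℝ) * (J1 : ℝ) - 1) *
            ∑ u, ∑ v, mU1 qU u * mU2 qU v * Phi2 qU f W M1 M2 J1 J2 u v y1 y2)
        - ((∑ u, ∑ v, mU1 qU u * mU2 qU v *
            (Phi3 qU f W M1 M2 J1 J2 u v y1 y2 * s2Aux qU f W v y2))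
          + ((M2 : ℝ) * (J2 : ℝ) - 1) *
            ∑ u, ∑ v, mU1 qU u * mU2 qU v * Phi3 qU f W M1 M2 J1 J2 u v y1 y2) := by
    have step : ∑ u, ∑ v, PT qU f W M1 M2 J1 J2 u v y1 y2
        ≤ ∑ u, ∑ v,
          (4 * (mU1 qU u * mU2 qU v * Phi0 qU f W M1 M2 J1 J2 u v y1 y2)
            - mU1 qU u * mU2 qU v * (Phi1 qU f W M1 M2 J1 J2 u v y1 y2 * rAux qU u v)
            - ((J1 : ℝ) * (J2 : ℝ) - 1) *
                (mU1 qU u * mU2 qU v * Phi1 qU f W M1 M2 J1 J2 u v y1 y2)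
            - mU1 qU u * mU2 qU v * (Phi2 qU f W M1 M2 J1 J2 u v y1 y2 * s1Aux qU f W u y1)
            - ((M1 : ℝ) * (J1 : ℝ) - 1) *
                (mU1 qU u * mU2 qU v * Phi2 qU f W M1 M2 J1 J2 u v y1 y2)
            - mU1 qU u * mU2 qU v * (Phi3 qU f W M1 M2 J1 J2 u v y1 y2 * s2Aux qU f W v y2)
            - ((M2 : ℝ) * (J2 : ℝ) - 1) *
                (mU1 qU u * mU2 qU v * Phi3 qU f W M1 M2 J1 J2 u v y1 y2)) :=
      Finset.sum_le_sum fun u _ => Finset.sum_le_sum fun v _ =>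
        main_pt qU f W M1 M2 J1 J2 hM1 hM2 hJ1 hJ2 u v y1 y2
    refine le_trans step (le_of_eq ?_)
    simp only [Finset.sum_sub_distrib, ← Finset.mul_sum]
    ring
  rw [hdist, h0eq]
  linarith [hg, hd1, hd2, hsum_pt]
end MBmainbound

section MBcorr
variable [DecidableEq X] (qU : FinPMF (U1 × U2)) (f : U1 → U2 → X) (W : X → FinPMF (Y1 × Y2))
  {M1 M2 J1 J2 : ℕ}

lemma tangent_app (hM1 : 0 < M1) (hM2 : 0 < M2) (hJ1 : 0 < J1) (hJ2 : 0 < J2)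
    (a : Fin M1) (b : Fin M2) (j1 : Fin J1) (j2 : Fin J2) (y1 : Y1) (y2 : Y2)
    (c : (Fin M1 × Fin J1 → U1) × (Fin M2 × Fin J2 → U2)) :
    4 * Phi0 qU f W M1 M2 J1 J2 (c.1 (a, j1)) (c.2 (b, j2)) y1 y2
      - Phi1 qU f W M1 M2 J1 J2 (c.1 (a, j1)) (c.2 (b, j2)) y1 y2 * GC qU c (a, b)
      - Phi2 qU f W M1 M2 J1 J2 (c.1 (a, j1)) (c.2 (b, j2)) y1 y2 * D1C qU f W c.1 y1
      - Phi3 qU f W M1 M2 J1 J2 (c.1 (a, j1)) (c.2 (b, j2)) y1 y2 * D2C qU f W c.2 y2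
    ≤ NN qU f W (c.1 (a, j1)) (c.2 (b, j2)) y1 y2 /
        (GC qU c (a, b) * D1C qU f W c.1 y1 * D2C qU f W c.2 y2) := by
  have h0 := oneleJJ J1 J2 hJ1 hJ2
  have h1 := oneleMJ1 M1 J1 hM1 hJ1
  have h2 := oneleMJ2 M2 J2 hM2 hJ2
  have hG : rAux qU (c.1 (a, j1)) (c.2 (b, j2)) ≤ GC qU c (a, b) := by
    calc rAux qU (c.1 (a, j1)) (c.2 (b, j2))
        ≤ ∑ j2', rAux qU (c.1 (a, j1)) (c.2 (b, j2')) :=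
        Finset.single_le_sum (f := fun j2' => rAux qU (c.1 (a, j1)) (c.2 (b, j2')))
          (fun t _ => rAux_nonneg qU _ _) (Finset.mem_univ j2)
      _ ≤ GC qU c (a, b) :=
        Finset.single_le_sum (f := fun j1' => ∑ j2', rAux qU (c.1 (a, j1')) (c.2 (b, j2')))
          (fun t _ => Finset.sum_nonneg fun t' _ => rAux_nonneg qU _ _) (Finset.mem_univ j1)
  have hD1 : s1Aux qU f W (c.1 (a, j1)) y1 ≤ D1C qU f W c.1 y1 :=
    Finset.single_le_sum (f := fun i => s1Aux qU f W (c.1 i) y1)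
      (fun t _ => s1Aux_nonneg qU f W _ _) (Finset.mem_univ (a, j1))
  have hD2 : s2Aux qU f W (c.2 (b, j2)) y2 ≤ D2C qU f W c.2 y2 :=
    Finset.single_le_sum (f := fun i => s2Aux qU f W (c.2 i) y2)
      (fun t _ => s2Aux_nonneg qU f W _ _) (Finset.mem_univ (b, j2))
  have base := tangent (r := rAux qU (c.1 (a, j1)) (c.2 (b, j2)))
    (w := (W (f (c.1 (a, j1)) (c.2 (b, j2)))).p (y1, y2))
    (s1 := s1Aux qU f W (c.1 (a, j1)) y1) (s2 := s2Aux qU f W (c.2 (b, j2)) y2)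
    (G := GC qU c (a, b)) (D1 := D1C qU f W c.1 y1) (D2 := D2C qU f W c.2 y2)
    (K0 := (J1 : ℝ) * (J2 : ℝ) - 1) (K1 := (M1 : ℝ) * (J1 : ℝ) - 1)
    (K2 := (M2 : ℝ) * (J2 : ℝ) - 1)
    (rAux_nonneg qU _ _) ((W _).nonneg _) (s1Aux_nonneg qU f W _ _)
    (s2Aux_nonneg qU f W _ _) (by linarith) (by linarith) (by linarith) hG hD1 hD2
  refine le_trans (le_of_eq ?_) base
  unfold Phi1 Phi2 Phi3 Phi0 NN
  ring

lemma corr_ge [Nonempty X] [Nonempty (Fin M1)] [Nonempty (Fin M2)]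
    (a : Fin M1) (b : Fin M2) (c : (Fin M1 × Fin J1 → U1) × (Fin M2 × Fin J2 → U2)) :
    ∑ y1 : Y1, ∑ y2 : Y2, ∑ j1 : Fin J1, ∑ j2 : Fin J2,
      NN qU f W (c.1 (a, j1)) (c.2 (b, j2)) y1 y2 /
        (GC qU c (a, b) * D1C qU f W c.1 y1 * D2C qU f W c.2 y2)
    ≤ ∑ x, ∑ y1, ∑ y2, (encC qU f c (a, b)).p x * (W x).p (y1, y2) *
        (dec1C qU f W c.1 y1).p a * (dec2C qU f W c.2 y2).p b := by
  have hA1 : ∑ x, ∑ y1, ∑ y2, (gEnc qU f c (a, b) x / GC qU c (a, b)) * (W x).p (y1, y2) *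
        (dec1C qU f W c.1 y1).p a * (dec2C qU f W c.2 y2).p b
      ≤ ∑ x, ∑ y1, ∑ y2, (encC qU f c (a, b)).p x * (W x).p (y1, y2) *
        (dec1C qU f W c.1 y1).p a * (dec2C qU f W c.2 y2).p b := by
    refine Finset.sum_le_sum fun x _ => Finset.sum_le_sum fun y1 _ =>
      Finset.sum_le_sum fun y2 _ => ?_
    exact mul_le_mul_of_nonneg_right (mul_le_mul_of_nonneg_right
      (mul_le_mul_of_nonneg_right (encC_ge qU f c (a, b) x) ((W x).nonneg _))
      ((dec1C qU f W c.1 y1).nonneg a)) ((dec2C qU f W c.2 y2).nonneg b)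
  refine le_trans ?_ hA1
  -- reorder so that `x` is innermost
  rw [Finset.sum_comm (γ := X) (f := fun x y1 => ∑ y2,
    (gEnc qU f c (a, b) x / GC qU c (a, b)) * (W x).p (y1, y2) *
      (dec1C qU f W c.1 y1).p a * (dec2C qU f W c.2 y2).p b)]
  refine Finset.sum_le_sum fun y1 _ => ?_
  rw [Finset.sum_comm (γ := X) (f := fun x y2 =>
    (gEnc qU f c (a, b) x / GC qU c (a, b)) * (W x).p (y1, y2) *
      (dec1C qU f W c.1 y1).p a * (dec2C qU f W c.2 y2).p b)]
  refine Finset.sum_le_sum fun y2 _ => ?_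
  -- now fixed (y1, y2): collapse the x-sum
  have hx : ∑ x, (gEnc qU f c (a, b) x / GC qU c (a, b)) * (W x).p (y1, y2) *
        (dec1C qU f W c.1 y1).p a * (dec2C qU f W c.2 y2).p b
      = ∑ j1, ∑ j2, (rAux qU (c.1 (a, j1)) (c.2 (b, j2)) / GC qU c (a, b)) *
          (W (f (c.1 (a, j1)) (c.2 (b, j2)))).p (y1, y2) *
          (dec1C qU f W c.1 y1).p a * (dec2C qU f W c.2 y2).p b := by
    have expand : ∀ x, (gEnc qU f c (a, b) x / GC qU c (a, b)) * (W x).p (y1, y2) *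
          (dec1C qU f W c.1 y1).p a * (dec2C qU f W c.2 y2).p b
        = ∑ j1, ∑ j2, (if f (c.1 (a, j1)) (c.2 (b, j2)) = x then
            (rAux qU (c.1 (a, j1)) (c.2 (b, j2)) / GC qU c (a, b)) *
              (W (f (c.1 (a, j1)) (c.2 (b, j2)))).p (y1, y2) *
              (dec1C qU f W c.1 y1).p a * (dec2C qU f W c.2 y2).p b else 0) := by
      intro x
      unfold gEnc
      rw [Finset.sum_div, Finset.sum_mul, Finset.sum_mul, Finset.sum_mul]
      refine Finset.sum_congr rfl fun j1 _ => ?_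
      rw [Finset.sum_div, Finset.sum_mul, Finset.sum_mul, Finset.sum_mul]
      refine Finset.sum_congr rfl fun j2 _ => ?_
      split_ifs with h
      · rw [h]
      · simp
    rw [Finset.sum_congr rfl fun x _ => expand x]
    rw [Finset.sum_comm]
    refine Finset.sum_congr rfl fun j1 _ => ?_
    rw [Finset.sum_comm]
    refine Finset.sum_congr rfl fun j2 _ => ?_
    exact Finset.sum_ite_eq Finset.univ _ _ |>.trans (by simp)
  rw [hx]
  refine Finset.sum_le_sum fun j1 _ => Finset.sum_le_sum fun j2 _ => ?_
  -- bound the two decoders from below and clean up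
  have hF : 0 ≤ rAux qU (c.1 (a, j1)) (c.2 (b, j2)) / GC qU c (a, b) *
      (W (f (c.1 (a, j1)) (c.2 (b, j2)))).p (y1, y2) :=
    mul_nonneg (div_nonneg (rAux_nonneg qU _ _) (GC_nonneg qU c (a, b))) ((W _).nonneg _)
  have hd1 := dec1C_ge qU f W c.1 y1 a j1
  have hd2 := dec2C_ge qU f W c.2 y2 b j2
  have hstep : rAux qU (c.1 (a, j1)) (c.2 (b, j2)) / GC qU c (a, b) *
        (W (f (c.1 (a, j1)) (c.2 (b, j2)))).p (y1, y2) *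
        (s1Aux qU f W (c.1 (a, j1)) y1 / D1C qU f W c.1 y1) *
        (s2Aux qU f W (c.2 (b, j2)) y2 / D2C qU f W c.2 y2)
      ≤ rAux qU (c.1 (a, j1)) (c.2 (b, j2)) / GC qU c (a, b) *
        (W (f (c.1 (a, j1)) (c.2 (b, j2)))).p (y1, y2) *
        (dec1C qU f W c.1 y1).p a * (dec2C qU f W c.2 y2).p b := by
    refine mul_le_mul (mul_le_mul_of_nonneg_left hd1 hF) hd2
      (div_nonneg (s2Aux_nonneg qU f W _ _) (D2C_nonneg qU f W c.2 y2))
      (mul_nonneg hF ((dec1C qU f W c.1 y1).nonneg a))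
  refine le_trans (le_of_eq ?_) hstep
  unfold NN
  ring

end MBcorr

lemma sum_swap24 {α β γ δ : Type} [Fintype α] [Fintype β] [Fintype γ] [Fintype δ]
    (F : α → β → γ → δ → ℝ) :
    ∑ a, ∑ b, ∑ c, ∑ d, F a b c d = ∑ c, ∑ d, ∑ a, ∑ b, F a b c d := by
  calc ∑ a, ∑ b, ∑ c, ∑ d, F a b c d
      = ∑ a, ∑ c, ∑ b, ∑ d, F a b c d :=
      Finset.sum_congr rfl fun a _ => Finset.sum_comm
    _ = ∑ c, ∑ a, ∑ b, ∑ d, F a b c d := Finset.sum_comm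
    _ = ∑ c, ∑ a, ∑ d, ∑ b, F a b c d :=
      Finset.sum_congr rfl fun c _ => Finset.sum_congr rfl fun a _ => Finset.sum_comm
    _ = ∑ c, ∑ d, ∑ a, ∑ b, F a b c d :=
      Finset.sum_congr rfl fun c _ => Finset.sum_comm

lemma sum_comm5out {A B C D E : Type} [Fintype A] [Fintype B] [Fintype C] [Fintype D]
    [Fintype E] (F : A → B → C → D → E → ℝ) :
    ∑ a, ∑ b, ∑ c, ∑ d, ∑ e, F a b c d e = ∑ e, ∑ a, ∑ b, ∑ c, ∑ d, F a b c d e := by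
  trans ∑ a, ∑ b, ∑ c, ∑ e, ∑ d, F a b c d e
  · exact Finset.sum_congr rfl fun a _ => Finset.sum_congr rfl fun b _ =>
      Finset.sum_congr rfl fun c _ => Finset.sum_comm
  trans ∑ a, ∑ b, ∑ e, ∑ c, ∑ d, F a b c d e
  · exact Finset.sum_congr rfl fun a _ => Finset.sum_congr rfl fun b _ => Finset.sum_comm
  trans ∑ a, ∑ e, ∑ b, ∑ c, ∑ d, F a b c d e
  · exact Finset.sum_congr rfl fun a _ => Finset.sum_comm
  exact Finset.sum_comm

section MBkey
variable [DecidableEq X] (qU : FinPMF (U1 × U2)) (f : U1 → U2 → X) (W : X → FinPMF (Y1 × Y2))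
  {M1 M2 J1 J2 : ℕ}

lemma key [Nonempty X] [Nonempty (Fin M1)] [Nonempty (Fin M2)]
    (hM1 : 0 < M1) (hM2 : 0 < M2) (hJ1 : 0 < J1) (hJ2 : 0 < J2)
    (a : Fin M1) (b : Fin M2) :
    (∑ u1 : U1, ∑ u2 : U2, ∑ y1 : Y1, ∑ y2 : Y2,
      qBC qU f W u1 u2 y1 y2 *
      ((1 + ((J1 : ℝ) * (J2 : ℝ))⁻¹ * (2 : ℝ) ^ (iU1U2 qU u1 u2)) *
       (1 + (M1 : ℝ) * (J1 : ℝ) * (2 : ℝ) ^ (-(iU1Y1 qU f W u1 y1))) *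
       (1 + (M2 : ℝ) * (J2 : ℝ) * (2 : ℝ) ^ (-(iU2Y2 qU f W u2 y2))))⁻¹)
    ≤ ∑ c : (Fin M1 × Fin J1 → U1) × (Fin M2 × Fin J2 → U2),
        ((∏ i, mU1 qU (c.1 i)) * ∏ i, mU2 qU (c.2 i)) *
        (∑ x, ∑ y1, ∑ y2, (encC qU f c (a, b)).p x * (W x).p (y1, y2) *
          (dec1C qU f W c.1 y1).p a * (dec2C qU f W c.2 y2).p b) := by
  -- Step 1: bound each term by (J1 J2) * PT
  have step1 : (∑ u1 : U1, ∑ u2 : U2, ∑ y1 : Y1, ∑ y2 : Y2,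
      qBC qU f W u1 u2 y1 y2 *
      ((1 + ((J1 : ℝ) * (J2 : ℝ))⁻¹ * (2 : ℝ) ^ (iU1U2 qU u1 u2)) *
       (1 + (M1 : ℝ) * (J1 : ℝ) * (2 : ℝ) ^ (-(iU1Y1 qU f W u1 y1))) *
       (1 + (M2 : ℝ) * (J2 : ℝ) * (2 : ℝ) ^ (-(iU2Y2 qU f W u2 y2))))⁻¹)
      ≤ ∑ u1 : U1, ∑ u2 : U2, ∑ y1 : Y1, ∑ y2 : Y2,
        (J1 : ℝ) * (J2 : ℝ) * PT qU f W M1 M2 J1 J2 u1 u2 y1 y2 := by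
    refine Finset.sum_le_sum fun u1 _ => Finset.sum_le_sum fun u2 _ =>
      Finset.sum_le_sum fun y1 _ => Finset.sum_le_sum fun y2 _ => ?_
    rcases (qBC_nonneg qU f W u1 u2 y1 y2).eq_or_lt with h | h
    · rw [← h, zero_mul]
      exact mul_nonneg (mul_nonneg (Nat.cast_nonneg _) (Nat.cast_nonneg _))
        (PT_nonneg qU f W M1 M2 J1 J2 hM1 hM2 hJ1 hJ2 u1 u2 y1 y2)
    · rw [kappa_term qU f W M1 M2 J1 J2 hJ1 hJ2 h]
      refine le_of_eq ?_
      unfold PT NN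
      ring
  refine le_trans step1 ?_
  -- Step 2: reorder and collapse the constant (j1, j2)-sums
  rw [sum_swap24 (F := fun u1 u2 y1 y2 =>
    (J1 : ℝ) * (J2 : ℝ) * PT qU f W M1 M2 J1 J2 u1 u2 y1 y2)]
  have hconst : ∀ Z : ℝ, (J1 : ℝ) * (J2 : ℝ) * Z = ∑ _j1 : Fin J1, ∑ _j2 : Fin J2, Z := by
    intro Z
    simp [Finset.sum_const, Finset.card_univ]
    ring
  have step2 : ∑ y1 : Y1, ∑ y2 : Y2, ∑ u1 : U1, ∑ u2 : U2,
      (J1 : ℝ) * (J2 : ℝ) * PT qU f W M1 M2 J1 J2 u1 u2 y1 y2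
      ≤ ∑ y1 : Y1, ∑ y2 : Y2, ∑ j1 : Fin J1, ∑ j2 : Fin J2,
        ∑ c : (Fin M1 × Fin J1 → U1) × (Fin M2 × Fin J2 → U2),
          ((∏ i, mU1 qU (c.1 i)) * ∏ i, mU2 qU (c.2 i)) *
          (4 * Phi0 qU f W M1 M2 J1 J2 (c.1 (a, j1)) (c.2 (b, j2)) y1 y2
            - Phi1 qU f W M1 M2 J1 J2 (c.1 (a, j1)) (c.2 (b, j2)) y1 y2 * GC qU c (a, b)
            - Phi2 qU f W M1 M2 J1 J2 (c.1 (a, j1)) (c.2 (b, j2)) y1 y2 * D1C qU f W c.1 y1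
            - Phi3 qU f W M1 M2 J1 J2 (c.1 (a, j1)) (c.2 (b, j2)) y1 y2 * D2C qU f W c.2 y2) := by
    refine Finset.sum_le_sum fun y1 _ => Finset.sum_le_sum fun y2 _ => ?_
    have e1 : ∑ u1 : U1, ∑ u2 : U2,
        (J1 : ℝ) * (J2 : ℝ) * PT qU f W M1 M2 J1 J2 u1 u2 y1 y2
        = (J1 : ℝ) * (J2 : ℝ) * ∑ u1 : U1, ∑ u2 : U2,
            PT qU f W M1 M2 J1 J2 u1 u2 y1 y2 := by
      rw [Finset.mul_sum]
      exact Finset.sum_congr rfl fun u1 _ => by rw [Finset.mul_sum]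
    rw [e1, hconst]
    exact Finset.sum_le_sum fun j1 _ => Finset.sum_le_sum fun j2 _ =>
      expect_bound qU f W M1 M2 J1 J2 hM1 hM2 hJ1 hJ2 a b j1 j2 y1 y2
  refine le_trans step2 ?_
  -- Step 3: pull the codebook-sum outside
  rw [sum_comm5out (F := fun (y1 : Y1) (y2 : Y2) (j1 : Fin J1) (j2 : Fin J2)
      (c : (Fin M1 × Fin J1 → U1) × (Fin M2 × Fin J2 → U2)) =>
      ((∏ i, mU1 qU (c.1 i)) * ∏ i, mU2 qU (c.2 i)) *
      (4 * Phi0 qU f W M1 M2 J1 J2 (c.1 (a, j1)) (c.2 (b, j2)) y1 y2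
        - Phi1 qU f W M1 M2 J1 J2 (c.1 (a, j1)) (c.2 (b, j2)) y1 y2 * GC qU c (a, b)
        - Phi2 qU f W M1 M2 J1 J2 (c.1 (a, j1)) (c.2 (b, j2)) y1 y2 * D1C qU f W c.1 y1
        - Phi3 qU f W M1 M2 J1 J2 (c.1 (a, j1)) (c.2 (b, j2)) y1 y2 * D2C qU f W c.2 y2))]
  refine Finset.sum_le_sum fun c _ => ?_
  rw [show ∑ y1 : Y1, ∑ y2 : Y2, ∑ j1 : Fin J1, ∑ j2 : Fin J2,
      ((∏ i, mU1 qU (c.1 i)) * ∏ i, mU2 qU (c.2 i)) *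
      (4 * Phi0 qU f W M1 M2 J1 J2 (c.1 (a, j1)) (c.2 (b, j2)) y1 y2
        - Phi1 qU f W M1 M2 J1 J2 (c.1 (a, j1)) (c.2 (b, j2)) y1 y2 * GC qU c (a, b)
        - Phi2 qU f W M1 M2 J1 J2 (c.1 (a, j1)) (c.2 (b, j2)) y1 y2 * D1C qU f W c.1 y1
        - Phi3 qU f W M1 M2 J1 J2 (c.1 (a, j1)) (c.2 (b, j2)) y1 y2 * D2C qU f W c.2 y2)
      = ((∏ i, mU1 qU (c.1 i)) * ∏ i, mU2 qU (c.2 i)) *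
        ∑ y1 : Y1, ∑ y2 : Y2, ∑ j1 : Fin J1, ∑ j2 : Fin J2,
        (4 * Phi0 qU f W M1 M2 J1 J2 (c.1 (a, j1)) (c.2 (b, j2)) y1 y2
          - Phi1 qU f W M1 M2 J1 J2 (c.1 (a, j1)) (c.2 (b, j2)) y1 y2 * GC qU c (a, b)
          - Phi2 qU f W M1 M2 J1 J2 (c.1 (a, j1)) (c.2 (b, j2)) y1 y2 * D1C qU f W c.1 y1
          - Phi3 qU f W M1 M2 J1 J2 (c.1 (a, j1)) (c.2 (b, j2)) y1 y2 * D2C qU f W c.2 y2)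
    from by simp only [← Finset.mul_sum]]
  have hw : 0 ≤ (∏ i, mU1 qU (c.1 i)) * ∏ i, mU2 qU (c.2 i) :=
    mul_nonneg (Finset.prod_nonneg fun i _ => mU1_nonneg qU _)
      (Finset.prod_nonneg fun i _ => mU2_nonneg qU _)
  refine mul_le_mul_of_nonneg_left ?_ hw
  refine le_trans ?_ (corr_ge qU f W a b c)
  refine Finset.sum_le_sum fun y1 _ => Finset.sum_le_sum fun y2 _ =>
    Finset.sum_le_sum fun j1 _ => Finset.sum_le_sum fun j2 _ => ?_
  exact tangent_app qU f W hM1 hM2 hJ1 hJ2 a b j1 j2 y1 y2 c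
end MBkey

/-- One-shot Marton bound for private messages. -/
theorem oneShot_marton_private (qU : FinPMF (U1 × U2)) (f : U1 → U2 → X)
    (W : X → FinPMF (Y1 × Y2)) (M1 M2 J1 J2 : ℕ)
    (hM1 : 0 < M1) (hM2 : 0 < M2) (hJ1 : 0 < J1) (hJ2 : 0 < J2) :
    ∃ (enc : Fin M1 × Fin M2 → FinPMF X)
      (dec1 : Y1 → FinPMF (Fin M1)) (dec2 : Y2 → FinPMF (Fin M2)),
      pCorrectBCp M1 M2 W enc dec1 dec2 ≥
        ∑ u1 : U1, ∑ u2 : U2, ∑ y1 : Y1, ∑ y2 : Y2,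
          qBC qU f W u1 u2 y1 y2 *
          ((1 + ((J1 : ℝ) * (J2 : ℝ))⁻¹ * (2 : ℝ) ^ (iU1U2 qU u1 u2)) *
           (1 + (M1 : ℝ) * (J1 : ℝ) * (2 : ℝ) ^ (-(iU1Y1 qU f W u1 y1))) *
           (1 + (M2 : ℝ) * (J2 : ℝ) * (2 : ℝ) ^ (-(iU2Y2 qU f W u2 y2))))⁻¹ := by
  haveI hUV : Nonempty (U1 × U2) := by
    by_contra h
    rw [not_nonempty_iff] at h
    have h1 := qU.sum_eq_one
    rw [Finset.univ_eq_empty, Finset.sum_empty] at h1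
    exact absurd h1 zero_ne_one
  haveI : Nonempty X := ⟨f hUV.some.1 hUV.some.2⟩
  haveI : DecidableEq X := Classical.decEq X
  haveI : Nonempty (Fin M1) := ⟨⟨0, hM1⟩⟩
  haveI : Nonempty (Fin M2) := ⟨⟨0, hM2⟩⟩
  set κ : ℝ := ∑ u1 : U1, ∑ u2 : U2, ∑ y1 : Y1, ∑ y2 : Y2,
      qBC qU f W u1 u2 y1 y2 *
      ((1 + ((J1 : ℝ) * (J2 : ℝ))⁻¹ * (2 : ℝ) ^ (iU1U2 qU u1 u2)) *
       (1 + (M1 : ℝ) * (J1 : ℝ) * (2 : ℝ) ^ (-(iU1Y1 qU f W u1 y1))) *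
       (1 + (M2 : ℝ) * (J2 : ℝ) * (2 : ℝ) ^ (-(iU2Y2 qU f W u2 y2))))⁻¹ with hκdef
  -- total weight of the random codebook is 1
  have hA : ∑ c1 : Fin M1 × Fin J1 → U1, ∏ i, mU1 qU (c1 i) = 1 := by
    have h := sum_pi_prod (ι := Fin M1 × Fin J1) (U := U1) (fun _ u => mU1 qU u)
    simpa [sum_mU1 qU] using h
  have hB : ∑ c2 : Fin M2 × Fin J2 → U2, ∏ i, mU2 qU (c2 i) = 1 := by
    have h := sum_pi_prod (ι := Fin M2 × Fin J2) (U := U2) (fun _ u => mU2 qU u)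
    simpa [sum_mU2 qU] using h
  have hwsum : ∑ c : (Fin M1 × Fin J1 → U1) × (Fin M2 × Fin J2 → U2),
      ((∏ i, mU1 qU (c.1 i)) * ∏ i, mU2 qU (c.2 i)) = 1 := by
    rw [Fintype.sum_prod_type]
    have : ∀ c1 : Fin M1 × Fin J1 → U1,
        ∑ c2 : Fin M2 × Fin J2 → U2, ((∏ i, mU1 qU (c1 i)) * ∏ i, mU2 qU (c2 i))
        = (∏ i, mU1 qU (c1 i)) := by
      intro c1
      rw [← Finset.mul_sum, hB, mul_one]
    rw [Finset.sum_congr rfl fun c1 _ => this c1, hA]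
  have hwn : ∀ c : (Fin M1 × Fin J1 → U1) × (Fin M2 × Fin J2 → U2),
      0 ≤ (∏ i, mU1 qU (c.1 i)) * ∏ i, mU2 qU (c.2 i) := fun c =>
    mul_nonneg (Finset.prod_nonneg fun i _ => mU1_nonneg qU _)
      (Finset.prod_nonneg fun i _ => mU2_nonneg qU _)
  -- rewrite the probability of correct decoding
  have hcorr : ∀ c : (Fin M1 × Fin J1 → U1) × (Fin M2 × Fin J2 → U2),
      pCorrectBCp M1 M2 W (encC qU f c) (dec1C qU f W c.1) (dec2C qU f W c.2)
      = ∑ a : Fin M1, ∑ b : Fin M2, (1 / ((M1 : ℝ) * (M2 : ℝ))) *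
          ∑ x, ∑ y1, ∑ y2, (encC qU f c (a, b)).p x * (W x).p (y1, y2) *
            (dec1C qU f W c.1 y1).p a * (dec2C qU f W c.2 y2).p b := by
    intro c
    unfold pCorrectBCp
    refine Finset.sum_congr rfl fun a _ => Finset.sum_congr rfl fun b _ => ?_
    rw [Finset.mul_sum]
    refine Finset.sum_congr rfl fun x _ => ?_
    rw [Finset.mul_sum]
    refine Finset.sum_congr rfl fun y1 _ => ?_
    rw [Finset.mul_sum]
    refine Finset.sum_congr rfl fun y2 _ => by ring
  -- the averaged probability of correct decoding is at least κ
  have havg : κ ≤ ∑ c : (Fin M1 × Fin J1 → U1) × (Fin M2 × Fin J2 → U2),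
      ((∏ i, mU1 qU (c.1 i)) * ∏ i, mU2 qU (c.2 i)) *
        pCorrectBCp M1 M2 W (encC qU f c) (dec1C qU f W c.1) (dec2C qU f W c.2) := by
    have hM1M2 : (0 : ℝ) < (M1 : ℝ) * (M2 : ℝ) := by
      have p1 : (0:ℝ) < (M1 : ℝ) := by exact_mod_cast hM1
      have p2 : (0:ℝ) < (M2 : ℝ) := by exact_mod_cast hM2
      positivity
    have step : ∑ c : (Fin M1 × Fin J1 → U1) × (Fin M2 × Fin J2 → U2),
        ((∏ i, mU1 qU (c.1 i)) * ∏ i, mU2 qU (c.2 i)) *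
          pCorrectBCp M1 M2 W (encC qU f c) (dec1C qU f W c.1) (dec2C qU f W c.2)
        = ∑ a : Fin M1, ∑ b : Fin M2, (1 / ((M1 : ℝ) * (M2 : ℝ))) *
            ∑ c : (Fin M1 × Fin J1 → U1) × (Fin M2 × Fin J2 → U2),
              ((∏ i, mU1 qU (c.1 i)) * ∏ i, mU2 qU (c.2 i)) *
              (∑ x, ∑ y1, ∑ y2, (encC qU f c (a, b)).p x * (W x).p (y1, y2) *
                (dec1C qU f W c.1 y1).p a * (dec2C qU f W c.2 y2).p b) := by
      calc ∑ c : (Fin M1 × Fin J1 → U1) × (Fin M2 × Fin J2 → U2),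
          ((∏ i, mU1 qU (c.1 i)) * ∏ i, mU2 qU (c.2 i)) *
            pCorrectBCp M1 M2 W (encC qU f c) (dec1C qU f W c.1) (dec2C qU f W c.2)
          = ∑ c : (Fin M1 × Fin J1 → U1) × (Fin M2 × Fin J2 → U2),
            ∑ a : Fin M1, ∑ b : Fin M2,
            ((∏ i, mU1 qU (c.1 i)) * ∏ i, mU2 qU (c.2 i)) *
              ((1 / ((M1 : ℝ) * (M2 : ℝ))) *
              ∑ x, ∑ y1, ∑ y2, (encC qU f c (a, b)).p x * (W x).p (y1, y2) *
                (dec1C qU f W c.1 y1).p a * (dec2C qU f W c.2 y2).p b) := by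
            refine Finset.sum_congr rfl fun c _ => ?_
            rw [hcorr c, Finset.mul_sum]
            exact Finset.sum_congr rfl fun a _ => by rw [Finset.mul_sum]
        _ = ∑ a : Fin M1, ∑ c : (Fin M1 × Fin J1 → U1) × (Fin M2 × Fin J2 → U2),
            ∑ b : Fin M2,
            ((∏ i, mU1 qU (c.1 i)) * ∏ i, mU2 qU (c.2 i)) *
              ((1 / ((M1 : ℝ) * (M2 : ℝ))) *
              ∑ x, ∑ y1, ∑ y2, (encC qU f c (a, b)).p x * (W x).p (y1, y2) *
                (dec1C qU f W c.1 y1).p a * (dec2C qU f W c.2 y2).p b) := Finset.sum_comm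
        _ = ∑ a : Fin M1, ∑ b : Fin M2,
            ∑ c : (Fin M1 × Fin J1 → U1) × (Fin M2 × Fin J2 → U2),
            ((∏ i, mU1 qU (c.1 i)) * ∏ i, mU2 qU (c.2 i)) *
              ((1 / ((M1 : ℝ) * (M2 : ℝ))) *
              ∑ x, ∑ y1, ∑ y2, (encC qU f c (a, b)).p x * (W x).p (y1, y2) *
                (dec1C qU f W c.1 y1).p a * (dec2C qU f W c.2 y2).p b) :=
            Finset.sum_congr rfl fun a _ => Finset.sum_comm
        _ = ∑ a : Fin M1, ∑ b : Fin M2, (1 / ((M1 : ℝ) * (M2 : ℝ))) *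
            ∑ c : (Fin M1 × Fin J1 → U1) × (Fin M2 × Fin J2 → U2),
              ((∏ i, mU1 qU (c.1 i)) * ∏ i, mU2 qU (c.2 i)) *
              (∑ x, ∑ y1, ∑ y2, (encC qU f c (a, b)).p x * (W x).p (y1, y2) *
                (dec1C qU f W c.1 y1).p a * (dec2C qU f W c.2 y2).p b) := by
            refine Finset.sum_congr rfl fun a _ => Finset.sum_congr rfl fun b _ => ?_
            rw [Finset.mul_sum]
            exact Finset.sum_congr rfl fun c _ => by ring
    rw [step]
    have perab : ∀ (a : Fin M1) (b : Fin M2),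
        (1 / ((M1 : ℝ) * (M2 : ℝ))) * κ
        ≤ (1 / ((M1 : ℝ) * (M2 : ℝ))) *
            ∑ c : (Fin M1 × Fin J1 → U1) × (Fin M2 × Fin J2 → U2),
              ((∏ i, mU1 qU (c.1 i)) * ∏ i, mU2 qU (c.2 i)) *
              (∑ x, ∑ y1, ∑ y2, (encC qU f c (a, b)).p x * (W x).p (y1, y2) *
                (dec1C qU f W c.1 y1).p a * (dec2C qU f W c.2 y2).p b) := by
      intro a b
      exact mul_le_mul_of_nonneg_left (key qU f W hM1 hM2 hJ1 hJ2 a b) (by positivity)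
    calc κ = ∑ _a : Fin M1, ∑ _b : Fin M2, (1 / ((M1 : ℝ) * (M2 : ℝ))) * κ := by
          simp only [Finset.sum_const, Finset.card_univ, Fintype.card_fin, smul_eq_mul]
          field_simp
          have h1 : (M1 : ℝ) ≠ 0 := by positivity
          have h2 : (M2 : ℝ) ≠ 0 := by positivity
          rw [nsmul_eq_mul, nsmul_eq_mul, ← mul_assoc]
          exact (mul_div_cancel₀ κ (mul_ne_zero h1 h2)).symm
      _ ≤ _ := Finset.sum_le_sum fun a _ => Finset.sum_le_sum fun b _ => perab a b
  -- extract a good codebook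
  have hex : ∃ c : (Fin M1 × Fin J1 → U1) × (Fin M2 × Fin J2 → U2),
      κ ≤ pCorrectBCp M1 M2 W (encC qU f c) (dec1C qU f W c.1) (dec2C qU f W c.2) := by
    by_contra hc
    push_neg at hc
    have hpos : (∑ _c : (Fin M1 × Fin J1 → U1) × (Fin M2 × Fin J2 → U2), (0:ℝ))
        < ∑ c : (Fin M1 × Fin J1 → U1) × (Fin M2 × Fin J2 → U2),
        ((∏ i, mU1 qU (c.1 i)) * ∏ i, mU2 qU (c.2 i)) := by
      rw [Finset.sum_const_zero, hwsum]; norm_num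
    obtain ⟨c₀, _, hc₀⟩ := Finset.exists_lt_of_sum_lt hpos
    have hlt : ∑ c : (Fin M1 × Fin J1 → U1) × (Fin M2 × Fin J2 → U2),
        ((∏ i, mU1 qU (c.1 i)) * ∏ i, mU2 qU (c.2 i)) *
          pCorrectBCp M1 M2 W (encC qU f c) (dec1C qU f W c.1) (dec2C qU f W c.2)
        < ∑ c : (Fin M1 × Fin J1 → U1) × (Fin M2 × Fin J2 → U2),
        ((∏ i, mU1 qU (c.1 i)) * ∏ i, mU2 qU (c.2 i)) * κ := by
      refine Finset.sum_lt_sum (fun c _ =>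
        mul_le_mul_of_nonneg_left (hc c).le (hwn c)) ⟨c₀, Finset.mem_univ c₀, ?_⟩
      exact mul_lt_mul_of_pos_left (hc c₀) hc₀
    rw [← Finset.sum_mul, hwsum, one_mul] at hlt
    exact absurd havg (not_le.mpr hlt)
  obtain ⟨c, hc⟩ := hex
  exact ⟨encC qU f c, dec1C qU f W c.1, dec2C qU f W c.2, hc⟩
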